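/- arXiv:2104.02943 — 5 statements merged into one kernel-verified Lean document; each statement's English description precedes it below -/
import Mathlib

section
/- Let s : ℝ^d → ℝ be a scoring function such that G_s and H_s are continuous and H_s is strictly increasing. For u ∈ (0,1) define the generalized inverse H_s^{-1}(u) = inf{t ∈ ℝ : H_s(t) ≥ u}, and for α ∈ (0,1) set ROC(s,α) = 1 − G_s(H_s^{-1}(1−α)). Then for every bounded nondecreasing Borel function φ : [0,1] → ℝ, W_φ(s) = (1/p)·∫₀¹ φ(u) du − ((1−p)/p)·∫₀¹ φ( p·(1−ROC(s,α)) + (1−p)·(1−α) ) dα. -/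
open MeasureTheory

noncomputable section

/-- cdf of the image of `μ` by the scoring function `s`. -/
def scoreCDF {d : ℕ} (μ : Measure (Fin d → ℝ)) (s : (Fin d → ℝ) → ℝ) (t : ℝ) : ℝ :=
  ((μ.map s) (Set.Iic t)).toReal

/-- pooled cdf `F_s = p G_s + (1-p) H_s`. -/
def pooledCDF {d : ℕ} (G H : Measure (Fin d → ℝ)) (p : ℝ) (s : (Fin d → ℝ) → ℝ)
    (t : ℝ) : ℝ :=
  p * scoreCDF G s t + (1 - p) * scoreCDF H s t

/-- `W_φ`-ranking performance of `s` : `E[φ(F_s(s(X)))]` with `X ~ G`. -/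
def Wperf {d : ℕ} (G H : Measure (Fin d → ℝ)) (p : ℝ) (φ : ℝ → ℝ)
    (s : (Fin d → ℝ) → ℝ) : ℝ :=
  ∫ x, φ (pooledCDF G H p s (s x)) ∂G

/-- generalized inverse of the cdf `H_s`. -/
def genInv {d : ℕ} (H : Measure (Fin d → ℝ)) (s : (Fin d → ℝ) → ℝ) (u : ℝ) : ℝ :=
  sInf {t : ℝ | u ≤ scoreCDF H s t}

/-- ROC curve of `s` : `α ↦ 1 − G_s(H_s⁻¹(1−α))`. -/
def ROC {d : ℕ} (G H : Measure (Fin d → ℝ)) (s : (Fin d → ℝ) → ℝ) (α : ℝ) : ℝ :=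
  1 - scoreCDF G s (genInv H s (1 - α))

open Set Filter ProbabilityTheory
open scoped Topology

/-- Probability integral transform: if the cdf of a probability measure on ℝ is continuous,
then the image of the measure under the cdf is the uniform measure on (0,1]. -/
lemma pit (μ : Measure ℝ) [IsProbabilityMeasure μ] {F : ℝ → ℝ}
    (hFdef : ∀ t, F t = (μ (Iic t)).toReal) (hcont : Continuous F) :
    μ.map F = volume.restrict (Ioc (0 : ℝ) 1) := by
  have hFcdf : ∀ t, F t = cdf μ t := fun t => by rw [hFdef, cdf_eq_real, measureReal_def]
  have h0 : ∀ t, 0 ≤ F t := fun t => by rw [hFcdf]; exact cdf_nonneg μ t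
  have h1 : ∀ t, F t ≤ 1 := fun t => by rw [hFcdf]; exact cdf_le_one μ t
  have hmono : Monotone F := fun a b hab => by rw [hFcdf, hFcdf]; exact monotone_cdf μ hab
  have htop : Tendsto F atTop (𝓝 1) := by
    have : F = ⇑(cdf μ) := funext hFcdf
    rw [this]; exact tendsto_cdf_atTop μ
  have hbot : Tendsto F atBot (𝓝 0) := by
    have : F = ⇑(cdf μ) := funext hFcdf
    rw [this]; exact tendsto_cdf_atBot μ
  haveI : IsFiniteMeasure (μ.map F) := by
    haveI : IsProbabilityMeasure (μ.map F) := Measure.isProbabilityMeasure_map hcont.measurable.aemeasurable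
    infer_instance
  refine Measure.ext_of_Iic _ _ (fun u => ?_)
  rw [Measure.map_apply hcont.measurable measurableSet_Iic,
    Measure.restrict_apply measurableSet_Iic]
  rcases le_or_gt 1 u with h1u | h1u
  · have hpre : F ⁻¹' Iic u = univ := eq_univ_of_forall fun x => (h1 x).trans h1u
    have hset : Iic u ∩ Ioc (0 : ℝ) 1 = Ioc 0 1 :=
      inter_eq_right.mpr (fun x hx => hx.2.trans h1u)
    rw [hpre, hset, measure_univ, Real.volume_Ioc]
    norm_num
  · set S := F ⁻¹' Iic u with hS
    rcases S.eq_empty_or_nonempty with hemp | hne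
    · have hu0 : u ≤ 0 := by
        by_contra h
        push_neg at h
        obtain ⟨x, hx⟩ := (hbot.eventually_lt_const h).exists
        have hxS : x ∈ S := le_of_lt hx
        rw [hemp] at hxS
        exact absurd hxS (notMem_empty x)
      have hset : Iic u ∩ Ioc (0 : ℝ) 1 = ∅ := by
        ext x
        simp only [mem_inter_iff, mem_Iic, mem_Ioc, mem_empty_iff_false, iff_false]
        rintro ⟨hxu, hx0, -⟩
        linarith
      rw [hemp, hset]
      simp
    · have hbdd : BddAbove S := by
        obtain ⟨M, hM⟩ := eventually_atTop.mp (htop.eventually_const_lt h1u)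
        refine ⟨M, fun x hx => ?_⟩
        by_contra hxM
        push_neg at hxM
        exact absurd (hM x hxM.le) (not_lt.mpr hx)
      set t := sSup S with ht
      have hScl : IsClosed S := isClosed_Iic.preimage hcont
      have htS : t ∈ S := hScl.csSup_mem hne hbdd
      have hFtle : F t ≤ u := htS
      have hFt : F t = u := by
        refine le_antisymm hFtle ?_
        by_contra h
        push_neg at h
        have hev : ∀ᶠ y in 𝓝 t, F y < u :=
          (hcont.continuousAt).eventually_lt continuousAt_const h
        have hev' : ∀ᶠ y in 𝓝[>] t, F y < u ∧ y ∈ Ioi t :=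
          (hev.filter_mono nhdsWithin_le_nhds).and self_mem_nhdsWithin
        obtain ⟨y, hy1, hy2⟩ := hev'.exists
        exact absurd (le_csSup hbdd (le_of_lt hy1 : y ∈ S)) (not_le.mpr hy2)
      have hSt : S = Iic t := by
        ext x
        constructor
        · exact fun hx => le_csSup hbdd hx
        · intro hx
          exact le_trans (hmono hx) hFtle
      have hu0 : 0 ≤ u := hFt ▸ h0 t
      have hμS : μ S = ENNReal.ofReal u := by
        rw [hSt, ← hFt, hFdef, ENNReal.ofReal_toReal (measure_ne_top μ _)]
      have hset : Iic u ∩ Ioc (0 : ℝ) 1 = Ioc 0 u := by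
        ext x
        simp only [mem_inter_iff, mem_Iic, mem_Ioc]
        constructor
        · rintro ⟨hxu, hx0, _⟩; exact ⟨hx0, hxu⟩
        · rintro ⟨hx0, hxu⟩; exact ⟨hxu, hx0, hxu.trans h1u.le⟩
      rw [hμS, hset, Real.volume_Ioc]
      norm_num

/-- Integral form of the probability integral transform. -/
lemma integral_pit (μ : Measure ℝ) [IsProbabilityMeasure μ] {F : ℝ → ℝ}
    (hFdef : ∀ t, F t = (μ (Iic t)).toReal) (hcont : Continuous F)
    (φ : ℝ → ℝ) (hφ : Measurable φ) :
    ∫ x, φ (F x) ∂μ = ∫ u in (0 : ℝ)..1, φ u := by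
  rw [intervalIntegral.integral_of_le zero_le_one,
    ← pit μ hFdef hcont,
    integral_map hcont.measurable.aemeasurable hφ.aestronglyMeasurable]

/-- expression of the `W_φ`-ranking performance as a summary of the ROC curve. -/
theorem stmt1 {d : ℕ} (G H : Measure (Fin d → ℝ))
    [IsProbabilityMeasure G] [IsProbabilityMeasure H]
    (p : ℝ) (hp : p ∈ Set.Ioo (0 : ℝ) 1)
    (s : (Fin d → ℝ) → ℝ) (hs : Measurable s)
    (hGs : Continuous (scoreCDF G s)) (hHs : Continuous (scoreCDF H s))
    (hHmono : StrictMono (scoreCDF H s))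
    (φ : ℝ → ℝ) (hφmono : MonotoneOn φ (Set.Icc 0 1)) (hφmeas : Measurable φ)
    (B : ℝ) (hφbdd : ∀ u ∈ Set.Icc (0 : ℝ) 1, |φ u| ≤ B) :
    Wperf G H p φ s
      = (1 / p) * (∫ u in (0 : ℝ)..1, φ u)
        - ((1 - p) / p) *
          ∫ α in (0 : ℝ)..1, φ (p * (1 - ROC G H s α) + (1 - p) * (1 - α)) := by
  obtain ⟨hp0, hp1⟩ := hp
  set Gm : Measure ℝ := G.map s with hGm
  set Hm : Measure ℝ := H.map s with hHm
  haveI : IsProbabilityMeasure Gm := Measure.isProbabilityMeasure_map hs.aemeasurable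
  haveI : IsProbabilityMeasure Hm := Measure.isProbabilityMeasure_map hs.aemeasurable
  set Fs : ℝ → ℝ := pooledCDF G H p s with hFsdef
  set μF : Measure ℝ := ENNReal.ofReal p • Gm + ENNReal.ofReal (1 - p) • Hm with hμF
  have hμF_Iic : ∀ A : Set ℝ, μF A
      = ENNReal.ofReal p * Gm A + ENNReal.ofReal (1 - p) * Hm A := by
    intro A
    simp [hμF, Measure.add_apply, Measure.smul_apply, smul_eq_mul]
  haveI : IsProbabilityMeasure μF := by
    constructor
    rw [hμF_Iic, measure_univ, measure_univ, mul_one, mul_one,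
      ← ENNReal.ofReal_add hp0.le (by linarith)]
    norm_num
  have hFs : ∀ t, Fs t = (μF (Iic t)).toReal := by
    intro t
    rw [hμF_Iic, ENNReal.toReal_add, ENNReal.toReal_mul, ENNReal.toReal_mul,
      ENNReal.toReal_ofReal hp0.le, ENNReal.toReal_ofReal (by linarith)]
    · rfl
    · exact ENNReal.mul_ne_top ENNReal.ofReal_ne_top (measure_ne_top _ _)
    · exact ENNReal.mul_ne_top ENNReal.ofReal_ne_top (measure_ne_top _ _)
  have hFscont : Continuous Fs := by
    show Continuous fun t => p * scoreCDF G s t + (1 - p) * scoreCDF H s t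
    exact (continuous_const.mul hGs).add (continuous_const.mul hHs)
  have hFs01 : ∀ t, Fs t ∈ Icc (0 : ℝ) 1 := by
    intro t
    rw [hFs]
    constructor
    · exact ENNReal.toReal_nonneg
    · exact ENNReal.toReal_le_of_le_ofReal zero_le_one (by simpa using prob_le_one)
  have hbound : ∀ t, ‖φ (Fs t)‖ ≤ B := fun t => by
    rw [Real.norm_eq_abs]; exact hφbdd _ (hFs01 t)
  have hφFsmeas : Measurable fun t => φ (Fs t) := hφmeas.comp hFscont.measurable
  have hintG : Integrable (fun t => φ (Fs t)) Gm :=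
    (integrable_const B).mono' hφFsmeas.aestronglyMeasurable (ae_of_all _ hbound)
  have hintH : Integrable (fun t => φ (Fs t)) Hm :=
    (integrable_const B).mono' hφFsmeas.aestronglyMeasurable (ae_of_all _ hbound)
  -- the three basic integrals
  set A : ℝ := ∫ t, φ (Fs t) ∂Gm with hA
  set J : ℝ := ∫ t, φ (Fs t) ∂Hm with hJ
  -- Wperf = A
  have hW : Wperf G H p φ s = A := by
    rw [hA, hGm, integral_map hs.aemeasurable hφFsmeas.aestronglyMeasurable]
    rfl
  -- splitting the pooled integral
  have hsplit : ∫ t, φ (Fs t) ∂μF = p * A + (1 - p) * J := by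
    rw [hμF, integral_add_measure (hintG.smul_measure ENNReal.ofReal_ne_top)
      (hintH.smul_measure ENNReal.ofReal_ne_top),
      integral_smul_measure, integral_smul_measure,
      ENNReal.toReal_ofReal hp0.le, ENNReal.toReal_ofReal (by linarith), smul_eq_mul, smul_eq_mul]
  -- probability integral transform for the pooled measure
  have hI : ∫ t, φ (Fs t) ∂μF = ∫ u in (0 : ℝ)..1, φ u :=
    integral_pit μF hFs hFscont φ hφmeas
  -- analysis of `genInv`
  have hHcdf : ∀ t, scoreCDF H s t = cdf Hm t := fun t => ((cdf_eq_real Hm t).trans (measureReal_def _ _)).symm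
  have hHfun : scoreCDF H s = ⇑(cdf Hm) := funext hHcdf
  have htopH : Tendsto (scoreCDF H s) atTop (𝓝 1) := by rw [hHfun]; exact tendsto_cdf_atTop Hm
  have hbotH : Tendsto (scoreCDF H s) atBot (𝓝 0) := by rw [hHfun]; exact tendsto_cdf_atBot Hm
  have hinv : ∀ t, genInv H s (scoreCDF H s t) = t := by
    intro t
    have : {x : ℝ | scoreCDF H s t ≤ scoreCDF H s x} = Ici t := by
      ext x; simp [hHmono.le_iff_le]
    rw [genInv, this, csInf_Ici]
  have hsec : ∀ u ∈ Ioo (0 : ℝ) 1, scoreCDF H s (genInv H s u) = u := by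
    intro u hu
    obtain ⟨a, ha⟩ := (hbotH.eventually_lt_const hu.1).exists
    obtain ⟨b, hb⟩ := (htopH.eventually_const_lt hu.2).exists
    have hab : a ≤ b := (hHmono.lt_iff_lt.mp (lt_trans ha hb)).le
    obtain ⟨t, _, htu⟩ := intermediate_value_Icc hab hHs.continuousOn ⟨ha.le, hb.le⟩
    have hset : {x : ℝ | u ≤ scoreCDF H s x} = Ici t := by
      ext x
      simp only [mem_setOf_eq, mem_Ici, ← htu, hHmono.le_iff_le]
    rw [genInv, hset, csInf_Ici, htu]
  -- genInv is monotone on (0,1)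
  have hginv_mono : MonotoneOn (genInv H s) (Ioo (0 : ℝ) 1) := by
    intro u₁ hu₁ u₂ hu₂ h12
    have hne₂ : {t : ℝ | u₂ ≤ scoreCDF H s t}.Nonempty := by
      refine ⟨genInv H s u₂, ?_⟩
      rw [mem_setOf_eq, hsec u₂ hu₂]
    have hbdd₁ : BddBelow {t : ℝ | u₁ ≤ scoreCDF H s t} := by
      obtain ⟨M, hM⟩ := eventually_atBot.mp (hbotH.eventually_lt_const hu₁.1)
      refine ⟨M, fun x hx => ?_⟩
      by_contra hxM
      push_neg at hxM
      exact absurd hx (not_le.mpr (hM x hxM.le))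
    exact csInf_le_csInf hbdd₁ hne₂ (fun t ht => le_trans h12 ht)
  -- map of Hm under its cdf
  have hmapH : Hm.map (scoreCDF H s) = volume.restrict (Ioc (0 : ℝ) 1) :=
    pit Hm (fun t => rfl) hHs
  have hrestr : volume.restrict (Ioo (0 : ℝ) 1) = volume.restrict (Ioc (0 : ℝ) 1) :=
    Measure.restrict_congr_set Ioo_ae_eq_Ioc
  have hmeasg : AEStronglyMeasurable (fun u => φ (Fs (genInv H s u)))
      (volume.restrict (Ioc (0 : ℝ) 1)) := by
    rw [← hrestr]
    exact ((hφmeas.comp hFscont.measurable).comp_aemeasurable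
      (aemeasurable_restrict_of_monotoneOn measurableSet_Ioo hginv_mono)).aestronglyMeasurable
  have hJ2 : J = ∫ u in Ioc (0 : ℝ) 1, φ (Fs (genInv H s u)) := by
    have h1 : J = ∫ t, φ (Fs (genInv H s (scoreCDF H s t))) ∂Hm := by
      rw [hJ]; simp only [hinv]
    have h2 : ∫ u, φ (Fs (genInv H s u)) ∂(Hm.map (scoreCDF H s))
        = ∫ t, φ (Fs (genInv H s (scoreCDF H s t))) ∂Hm := by
      rw [integral_map hHs.measurable.aemeasurable (by rwa [hmapH])]
    rw [h1, ← h2, hmapH]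
  -- change of variable in the target integral
  have hT : (∫ α in (0 : ℝ)..1, φ (p * (1 - ROC G H s α) + (1 - p) * (1 - α)))
      = ∫ u in Ioc (0 : ℝ) 1, φ (Fs (genInv H s u)) := by
    have step1 : (∫ α in (0 : ℝ)..1, φ (p * (1 - ROC G H s α) + (1 - p) * (1 - α)))
        = ∫ α in (0 : ℝ)..1, φ (Fs (genInv H s (1 - α))) := by
      rw [intervalIntegral.integral_of_le zero_le_one,
        intervalIntegral.integral_of_le zero_le_one,
        integral_Ioc_eq_integral_Ioo, integral_Ioc_eq_integral_Ioo]
      refine setIntegral_congr_fun measurableSet_Ioo (fun α hα => ?_)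
      have h1α : (1 : ℝ) - α ∈ Ioo (0 : ℝ) 1 := ⟨by linarith [hα.2], by linarith [hα.1]⟩
      have : p * (1 - ROC G H s α) + (1 - p) * (1 - α) = Fs (genInv H s (1 - α)) := by
        rw [ROC, hFsdef, pooledCDF, hsec _ h1α]
        ring
      rw [this]
    have step2 : (∫ α in (0 : ℝ)..1, φ (Fs (genInv H s (1 - α))))
        = ∫ u in (0 : ℝ)..1, φ (Fs (genInv H s u)) := by
      have := intervalIntegral.integral_comp_sub_left
        (a := (0 : ℝ)) (b := 1) (fun u => φ (Fs (genInv H s u))) 1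
      simpa using this
    rw [step1, step2, intervalIntegral.integral_of_le zero_le_one]
  rw [hW, hT, ← hJ2]
  have hkey : p * A + (1 - p) * J = ∫ u in (0 : ℝ)..1, φ u := by rw [← hsplit, hI]
  field_simp
  linarith
end
end

section
/- Assume G is absolutely continuous with respect to H and let Ψ = dG/dH be a (Borel measurable, real-valued) version of the likelihood ratio. Let φ : [0,1] → ℝ be bounded, nondecreasing and Borel measurable, and let s : ℝ^d → ℝ be any scoring function such that both F_s and F_Ψ are continuous. Then W_φ(s) ≤ W_φ(Ψ), i.e. the likelihood ratio maximizes the W_φ-ranking performance over all scoring functions with continuous pooled score distribution. -/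
open MeasureTheory Set Filter ProbabilityTheory

noncomputable section

/-- the pooled pushforward measure on ℝ. -/
def pooledM {d : ℕ} (G H : Measure (Fin d → ℝ)) (p : ℝ) (s : (Fin d → ℝ) → ℝ) : Measure ℝ :=
  (ENNReal.ofReal p) • (G.map s) + (ENNReal.ofReal (1 - p)) • (H.map s)

variable {d : ℕ} {G H : Measure (Fin d → ℝ)} {p : ℝ} {s : (Fin d → ℝ) → ℝ}

lemma pooledM_apply [IsProbabilityMeasure G] [IsProbabilityMeasure H]
    (hs : Measurable s) {E : Set ℝ} (hE : MeasurableSet E) :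
    pooledM G H p s E
      = ENNReal.ofReal p * G (s ⁻¹' E) + ENNReal.ofReal (1 - p) * H (s ⁻¹' E) := by
  simp [pooledM, Measure.map_apply hs hE]

lemma pooledM_prob [IsProbabilityMeasure G] [IsProbabilityMeasure H]
    (hp : p ∈ Set.Ioo (0:ℝ) 1) (hs : Measurable s) : IsProbabilityMeasure (pooledM G H p s) := by
  constructor
  have hmG : IsProbabilityMeasure (G.map s) := Measure.isProbabilityMeasure_map hs.aemeasurable
  have hmH : IsProbabilityMeasure (H.map s) := Measure.isProbabilityMeasure_map hs.aemeasurable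
  simp only [pooledM, Measure.add_apply, Measure.smul_apply, smul_eq_mul, measure_univ, mul_one]
  rw [← ENNReal.ofReal_add hp.1.le (by linarith [hp.2] : (0:ℝ) ≤ 1 - p)]
  norm_num

lemma pooledCDF_eq_cdf [IsProbabilityMeasure G] [IsProbabilityMeasure H]
    (hp : p ∈ Set.Ioo (0:ℝ) 1) (hs : Measurable s) :
    pooledCDF G H p s = cdf (pooledM G H p s) := by
  have := pooledM_prob (G := G) (H := H) hp hs
  funext t
  rw [cdf_eq_real, measureReal_def]
  rw [pooledM_apply hs measurableSet_Iic]
  have h1 : ENNReal.ofReal p * G (s ⁻¹' Set.Iic t) ≠ ⊤ :=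
    ENNReal.mul_ne_top ENNReal.ofReal_ne_top (measure_ne_top _ _)
  have h2 : ENNReal.ofReal (1 - p) * H (s ⁻¹' Set.Iic t) ≠ ⊤ :=
    ENNReal.mul_ne_top ENNReal.ofReal_ne_top (measure_ne_top _ _)
  rw [ENNReal.toReal_add h1 h2, ENNReal.toReal_mul, ENNReal.toReal_mul,
    ENNReal.toReal_ofReal hp.1.le, ENNReal.toReal_ofReal (by linarith [hp.2] : (0:ℝ) ≤ 1 - p)]
  simp [pooledCDF, scoreCDF, Measure.map_apply hs measurableSet_Iic]

/-- a continuous cdf has no atoms. -/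
lemma measure_singleton_eq_zero_of_continuous_cdf (ν : Measure ℝ) [IsProbabilityMeasure ν]
    (hc : Continuous (cdf ν)) (x : ℝ) : ν {x} = 0 := by
  have hleft : Function.leftLim (cdf ν : ℝ → ℝ) x = cdf ν x := by
    apply leftLim_eq_of_tendsto
    exact (hc.tendsto x).mono_left nhdsWithin_le_nhds
  have : ν {x} = (cdf ν).measure {x} := by rw [measure_cdf]
  rw [this, StieltjesFunction.measure_singleton, hleft, sub_self, ENNReal.ofReal_zero]

lemma measure_Iio_eq [IsProbabilityMeasure G] [IsProbabilityMeasure H]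
    (hp : p ∈ Set.Ioo (0:ℝ) 1) (hs : Measurable s)
    (hcont : Continuous (pooledCDF G H p s)) (x : ℝ) :
    pooledM G H p s (Set.Iio x) = ENNReal.ofReal (pooledCDF G H p s x) := by
  have := pooledM_prob (G := G) (H := H) hp hs
  have hc : Continuous (cdf (pooledM G H p s)) := by
    rwa [← pooledCDF_eq_cdf hp hs]
  have h0 : pooledM G H p s {x} = 0 :=
    measure_singleton_eq_zero_of_continuous_cdf _ hc x
  have : Set.Iic x = Set.Iio x ∪ {x} := (Set.Iio_union_right).symm
  have hIic : pooledM G H p s (Set.Iic x)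
      = pooledM G H p s (Set.Iio x) + pooledM G H p s {x} := by
    rw [this]
    exact measure_union (by simp) (measurableSet_singleton x)
  rw [h0, add_zero] at hIic
  rw [← hIic, pooledCDF_eq_cdf hp hs, ofReal_cdf]
open scoped Topology in
/-- Quantile lemma: the upper level set of a continuous pooled cdf is a closed ray
with pooled mass `1 - t`. -/
lemma quantile_lemma [IsProbabilityMeasure G] [IsProbabilityMeasure H]
    (hp : p ∈ Set.Ioo (0:ℝ) 1) (hs : Measurable s)
    (hcont : Continuous (pooledCDF G H p s)) {t : ℝ} (ht : 0 < t)
    (hne : {y : ℝ | t ≤ pooledCDF G H p s y}.Nonempty) :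
    ∃ q : ℝ, {y : ℝ | t ≤ pooledCDF G H p s y} = Set.Ici q ∧
      pooledM G H p s (Set.Ici q) = ENNReal.ofReal (1 - t) ∧ t ≤ 1 := by
  have hprob := pooledM_prob (G := G) (H := H) hp hs
  set f := pooledCDF G H p s with hf
  have hfc : f = cdf (pooledM G H p s) := pooledCDF_eq_cdf hp hs
  have hmono : Monotone f := by rw [hfc]; exact monotone_cdf _
  have hle1 : ∀ y, f y ≤ 1 := by intro y; rw [hfc]; exact cdf_le_one _ y
  set S := {y : ℝ | t ≤ f y} with hS
  have hbot : Tendsto f atBot (𝓝 0) := by rw [hfc]; exact tendsto_cdf_atBot _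
  obtain ⟨y₀, hy₀⟩ : ∃ y₀, f y₀ < t := (hbot.eventually (eventually_lt_nhds ht)).exists
  have hbdd : BddBelow S := by
    refine ⟨y₀, fun y hy => ?_⟩
    by_contra hyy
    push_neg at hyy
    exact absurd (le_trans hy (hmono hyy.le)) (not_le.mpr hy₀)
  have hclosed : IsClosed S := (isClosed_Ici).preimage hcont
  set q := sInf S with hq
  have hqS : q ∈ S := hclosed.csInf_mem hne hbdd
  have hqS' : t ≤ f q := hqS
  have hSq : S = Set.Ici q := by
    apply Set.Subset.antisymm
    · exact fun y hy => csInf_le hbdd hy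
    · exact fun y hy => le_trans hqS' (hmono hy)
  have ht1 : t ≤ 1 := le_trans hqS' (hle1 q)
  have hfq : f q = t := by
    refine le_antisymm ?_ hqS'
    have htend : Tendsto f (nhdsWithin q (Set.Iio q)) (𝓝 (f q)) :=
      (hcont.tendsto q).mono_left nhdsWithin_le_nhds
    refine le_of_tendsto htend ?_
    filter_upwards [self_mem_nhdsWithin] with y hy
    have : y ∉ S := by rw [hSq]; exact fun h => absurd (lt_of_lt_of_le hy h) (lt_irrefl y)
    exact (not_le.mp this).le
  refine ⟨q, hSq, ?_, ht1⟩
  have hIio : pooledM G H p s (Set.Iio q) = ENNReal.ofReal t := by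
    rw [measure_Iio_eq hp hs hcont, ← hf, hfq]
  have hcompl : Set.Ici q = (Set.Iio q)ᶜ := by simp
  rw [hcompl, measure_compl measurableSet_Iio (measure_ne_top _ _), measure_univ, hIio]
  rw [ENNReal.ofReal_sub _ ht.le, ENNReal.ofReal_one]

open scoped Topology in
/-- The distribution of `F_s ∘ s` under `G` has no atoms. -/
lemma atom_zero [IsProbabilityMeasure G] [IsProbabilityMeasure H]
    (hp : p ∈ Set.Ioo (0:ℝ) 1) (hs : Measurable s)
    (hcont : Continuous (pooledCDF G H p s)) (u : ℝ) :
    G {x | pooledCDF G H p s (s x) = u} = 0 := by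
  have hprob := pooledM_prob (G := G) (H := H) hp hs
  set f := pooledCDF G H p s with hf
  have hfc : f = cdf (pooledM G H p s) := pooledCDF_eq_cdf hp hs
  have hmono : Monotone f := by rw [hfc]; exact monotone_cdf _
  set ν := pooledM G H p s with hν
  set T := {y : ℝ | f y = u} with hT
  have hTmeas : MeasurableSet T := hcont.measurable (measurableSet_singleton u)
  have hclosed : IsClosed T := (isClosed_singleton (x := u)).preimage hcont
  have hνT : ν T = 0 := by
    rcases Set.eq_empty_or_nonempty T with hTe | ⟨y₀, hy₀mem⟩
    · rw [hTe]; exact measure_empty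
    · have hy₀ : f y₀ = u := hy₀mem
      have hIic : ∀ x, ν (Set.Iic x) = ENNReal.ofReal (f x) := by
        intro x; rw [hfc, ofReal_cdf]
      have hIio : ∀ x, ν (Set.Iio x) = ENNReal.ofReal (f x) :=
        fun x => measure_Iio_eq hp hs hcont x
      have hsub : ν (T ∩ Set.Iic y₀) = 0 := by
        by_cases hbdd : BddBelow T
        · set m := sInf T with hm
          have hmT : f m = u := hclosed.csInf_mem ⟨y₀, hy₀mem⟩ hbdd
          have hsub2 : T ∩ Set.Iic y₀ ⊆ Set.Icc m y₀ :=
            fun y hy => ⟨csInf_le hbdd hy.1, hy.2⟩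
          refine measure_mono_null hsub2 ?_
          have heq : Set.Icc m y₀ = Set.Iic y₀ \ Set.Iio m := by
            ext z; simp only [Set.mem_Icc, Set.mem_diff, Set.mem_Iic, Set.mem_Iio, not_lt]
            tauto
          have hmy : m ≤ y₀ := csInf_le hbdd hy₀mem
          have hss : Set.Iio m ⊆ Set.Iic y₀ := fun z hz => le_trans (le_of_lt hz) hmy
          rw [heq, measure_diff hss measurableSet_Iio.nullMeasurableSet (measure_ne_top _ _),
            hIic, hIio, hy₀, hmT]
          simp
        · have hu0 : u = 0 := by
            have hbot : Tendsto f atBot (𝓝 0) := by rw [hfc]; exact tendsto_cdf_atBot _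
            have hconst : ∀ᶠ y in atBot, f y = u := by
              rw [eventually_atBot]
              refine ⟨y₀, fun y hy => ?_⟩
              obtain ⟨z, hzT, hzy⟩ : ∃ z ∈ T, z < y := by
                by_contra hcon
                push_neg at hcon
                exact hbdd ⟨y - 1, fun w hw => by linarith [hcon w hw]⟩
              have hzu : f z = u := hzT
              exact le_antisymm (hy₀ ▸ hmono hy) (hzu ▸ hmono hzy.le)
            exact tendsto_nhds_unique tendsto_const_nhds (hbot.congr' hconst)
          refine measure_mono_null (Set.inter_subset_right) ?_
          rw [hIic, hy₀, hu0]; simp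
      have hsup : ν (T ∩ Set.Ioi y₀) = 0 := by
        by_cases hbdd : BddAbove T
        · set M := sSup T with hM
          have hMT : f M = u := hclosed.csSup_mem ⟨y₀, hy₀mem⟩ hbdd
          have hsub2 : T ∩ Set.Ioi y₀ ⊆ Set.Ioc y₀ M :=
            fun y hy => ⟨hy.2, le_csSup hbdd hy.1⟩
          refine measure_mono_null hsub2 ?_
          have heq : Set.Ioc y₀ M = Set.Iic M \ Set.Iic y₀ := by
            ext z; simp only [Set.mem_Ioc, Set.mem_diff, Set.mem_Iic, not_le]
            tauto
          have hyM : y₀ ≤ M := le_csSup hbdd hy₀mem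
          have hss : Set.Iic y₀ ⊆ Set.Iic M := fun z hz => le_trans hz hyM
          rw [heq, measure_diff hss measurableSet_Iic.nullMeasurableSet (measure_ne_top _ _),
            hIic, hIic, hy₀, hMT]
          simp
        · have hu1 : u = 1 := by
            have htop : Tendsto f atTop (𝓝 1) := by rw [hfc]; exact tendsto_cdf_atTop _
            have hconst : ∀ᶠ y in atTop, f y = u := by
              rw [eventually_atTop]
              refine ⟨y₀, fun y hy => ?_⟩
              obtain ⟨z, hzT, hzy⟩ : ∃ z ∈ T, y < z := by
                by_contra hcon
                push_neg at hcon
                exact hbdd ⟨y + 1, fun w hw => by linarith [hcon w hw]⟩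
              have hzu : f z = u := hzT
              exact le_antisymm (hzu ▸ hmono hzy.le) (hy₀ ▸ hmono hy)
            exact tendsto_nhds_unique tendsto_const_nhds (htop.congr' hconst)
          refine measure_mono_null (Set.inter_subset_right) ?_
          have : Set.Ioi y₀ = (Set.Iic y₀)ᶜ := by simp
          rw [this, measure_compl measurableSet_Iic (measure_ne_top _ _), measure_univ,
            hIic, hy₀, hu1]
          simp
      have hcover : T = (T ∩ Set.Iic y₀) ∪ (T ∩ Set.Ioi y₀) := by
        ext z
        simp only [Set.mem_union, Set.mem_inter_iff, Set.mem_Iic, Set.mem_Ioi]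
        by_cases hz : z ≤ y₀ <;> [tauto; exact ⟨fun h => Or.inr ⟨h, not_le.mp hz⟩, by tauto⟩]
      rw [hcover]
      exact le_antisymm (le_trans (measure_union_le _ _)
        (by rw [hsub, hsup, add_zero])) zero_le
  -- conclude for G
  have hGle : ENNReal.ofReal p * G (s ⁻¹' T) ≤ ν T := by
    rw [hν, pooledM_apply hs hTmeas]
    exact le_add_of_nonneg_right zero_le
  rw [hνT] at hGle
  have hzero : ENNReal.ofReal p * G (s ⁻¹' T) = 0 := le_antisymm hGle zero_le
  have hp0 : ENNReal.ofReal p ≠ 0 := by simp [ENNReal.ofReal_eq_zero, not_le, hp.1]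
  have : G (s ⁻¹' T) = 0 := (mul_eq_zero.mp hzero).resolve_left hp0
  exact this
open scoped Topology ENNReal in
/-- Key Neyman–Pearson comparison: for every threshold `t > 0`, the `G`-mass of the upper level
set of `F_s ∘ s` is at most that of `F_Ψ ∘ Ψ`. -/
lemma keyNP {d : ℕ} (G H : Measure (Fin d → ℝ))
    [IsProbabilityMeasure G] [IsProbabilityMeasure H]
    (p : ℝ) (hp : p ∈ Set.Ioo (0 : ℝ) 1)
    (Ψ : (Fin d → ℝ) → ℝ) (hΨmeas : Measurable Ψ)
    (hΨ : G = H.withDensity fun x => ENNReal.ofReal (Ψ x))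
    (s : (Fin d → ℝ) → ℝ) (hs : Measurable s)
    (hFs : Continuous (pooledCDF G H p s))
    (hFΨ : Continuous (pooledCDF G H p Ψ))
    (t : ℝ) (ht : 0 < t) :
    G {x | t ≤ pooledCDF G H p s (s x)} ≤ G {x | t ≤ pooledCDF G H p Ψ (Ψ x)} := by
  classical
  by_cases hS : {y : ℝ | t ≤ pooledCDF G H p s y}.Nonempty
  swap
  · have hempty : {x | t ≤ pooledCDF G H p s (s x)} = ∅ := by
      rw [Set.not_nonempty_iff_eq_empty] at hS
      ext x
      simp only [Set.mem_setOf_eq, Set.mem_empty_iff_false, iff_false]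
      intro hx
      have hmem : s x ∈ {y | t ≤ pooledCDF G H p s y} := hx
      simp [hS] at hmem
    rw [hempty]; simp
  obtain ⟨q, hSq, hνq, ht1⟩ := quantile_lemma hp hs hFs ht hS
  have hAeq : {x | t ≤ pooledCDF G H p s (s x)} = s ⁻¹' Set.Ici q := by
    ext x; constructor
    · intro hx; exact hSq ▸ (hx : s x ∈ {y | t ≤ pooledCDF G H p s y})
    · intro hx; exact (Set.ext_iff.mp hSq (s x)).mpr hx
  set A := s ⁻¹' Set.Ici q with hA
  have hAmeas : MeasurableSet A := hs measurableSet_Ici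
  by_cases hSΨ : {y : ℝ | t ≤ pooledCDF G H p Ψ y}.Nonempty
  swap
  · -- then t = 1 and the pooled mass of A is 0, hence G A = 0
    have hts : t = 1 := by
      refine le_antisymm ht1 ?_
      have htop : Tendsto (pooledCDF G H p Ψ) atTop (𝓝 1) := by
        rw [pooledCDF_eq_cdf hp hΨmeas]; exact tendsto_cdf_atTop _
      refine le_of_tendsto htop (Eventually.of_forall fun y => ?_)
      by_contra hy
      exact hSΨ ⟨y, (not_le.mp hy).le⟩
    have hν0 : pooledM G H p s (Set.Ici q) = 0 := by rw [hνq, hts]; simp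
    rw [pooledM_apply hs measurableSet_Ici] at hν0
    have hGA : G A = 0 := by
      have := add_eq_zero.mp hν0
      have hp0 : ENNReal.ofReal p ≠ 0 := by simp [ENNReal.ofReal_eq_zero, not_le, hp.1]
      exact (mul_eq_zero.mp this.1).resolve_left hp0
    rw [hAeq, hGA]
    exact zero_le
  obtain ⟨r, hSr, hνr, _⟩ := quantile_lemma hp hΨmeas hFΨ ht hSΨ
  have hBeq : {x | t ≤ pooledCDF G H p Ψ (Ψ x)} = Ψ ⁻¹' Set.Ici r := by
    ext x; constructor
    · intro hx; exact hSr ▸ (hx : Ψ x ∈ {y | t ≤ pooledCDF G H p Ψ y})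
    · intro hx; exact (Set.ext_iff.mp hSr (Ψ x)).mpr hx
  set B := Ψ ⁻¹' Set.Ici r with hB
  have hBmeas : MeasurableSet B := hΨmeas measurableSet_Ici
  rw [hAeq, hBeq]
  -- pooled mass identities
  have hmassA : ENNReal.ofReal p * G A + ENNReal.ofReal (1 - p) * H A
      = ENNReal.ofReal (1 - t) := by rw [hA, ← pooledM_apply hs measurableSet_Ici, hνq]
  have hmassB : ENNReal.ofReal p * G B + ENNReal.ofReal (1 - p) * H B
      = ENNReal.ofReal (1 - t) := by rw [hB, ← pooledM_apply hΨmeas measurableSet_Ici, hνr]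
  -- Neyman–Pearson inequality
  set f : (Fin d → ℝ) → ℝ≥0∞ := fun x => ENNReal.ofReal (Ψ x) with hfdef
  have hfmeas : Measurable f := hΨmeas.ennreal_ofReal
  have hGint : ∀ E : Set (Fin d → ℝ), MeasurableSet E → G E = ∫⁻ x in E, f x ∂H := by
    intro E hE; rw [hΨ, withDensity_apply _ hE]
  have hcnn : (0:ℝ) ≤ max r 0 := le_max_right _ _
  have hNP : G A + ENNReal.ofReal (max r 0) * H B
      ≤ G B + ENNReal.ofReal (max r 0) * H A := by
    have hdAB : Disjoint (A ∩ B) (A \ B) :=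
      Set.disjoint_sdiff_right.mono_left Set.inter_subset_right
    have hdBA : Disjoint (A ∩ B) (B \ A) :=
      Set.disjoint_sdiff_right.mono_left Set.inter_subset_left
    have hAun : A = (A ∩ B) ∪ (A \ B) := (Set.inter_union_diff A B).symm
    have hBun : B = (A ∩ B) ∪ (B \ A) := by
      rw [Set.inter_comm]; exact (Set.inter_union_diff B A).symm
    have h1 : ∫⁻ x in A \ B, f x ∂H ≤ ENNReal.ofReal (max r 0) * H (A \ B) := by
      rw [← setLIntegral_const]
      refine setLIntegral_mono measurable_const fun x hx => ?_
      have hxB : Ψ x < r := not_le.mp hx.2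
      exact ENNReal.ofReal_le_ofReal (le_trans hxB.le (le_max_left _ _))
    have h2 : ENNReal.ofReal (max r 0) * H (B \ A) ≤ ∫⁻ x in B \ A, f x ∂H := by
      rw [← setLIntegral_const]
      refine setLIntegral_mono hfmeas fun x hx => ?_
      have hxB : r ≤ Ψ x := hx.1
      rcases le_total r 0 with h0 | h0
      · simp [max_eq_right h0]
      · rw [max_eq_left h0]
        exact ENNReal.ofReal_le_ofReal hxB
    have hGA : G A = ∫⁻ x in A ∩ B, f x ∂H + ∫⁻ x in A \ B, f x ∂H := by
      rw [hGint A hAmeas]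
      conv_lhs => rw [hAun]
      exact lintegral_union (hAmeas.diff hBmeas) hdAB
    have hGB : G B = ∫⁻ x in A ∩ B, f x ∂H + ∫⁻ x in B \ A, f x ∂H := by
      rw [hGint B hBmeas]
      conv_lhs => rw [hBun]
      exact lintegral_union (hBmeas.diff hAmeas) hdBA
    have hHA : H A = H (A ∩ B) + H (A \ B) := by
      conv_lhs => rw [hAun]
      exact measure_union hdAB (hAmeas.diff hBmeas)
    have hHB : H B = H (A ∩ B) + H (B \ A) := by
      conv_lhs => rw [hBun]
      exact measure_union hdBA (hBmeas.diff hAmeas)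
    rw [hGA, hGB, hHA, hHB, mul_add, mul_add]
    calc ∫⁻ x in A ∩ B, f x ∂H + ∫⁻ x in A \ B, f x ∂H
          + (ENNReal.ofReal (max r 0) * H (A ∩ B) + ENNReal.ofReal (max r 0) * H (B \ A))
        ≤ ∫⁻ x in A ∩ B, f x ∂H + ENNReal.ofReal (max r 0) * H (A \ B)
          + (ENNReal.ofReal (max r 0) * H (A ∩ B) + ∫⁻ x in B \ A, f x ∂H) := by
          gcongr
      _ = ∫⁻ x in A ∩ B, f x ∂H + ∫⁻ x in B \ A, f x ∂H
          + (ENNReal.ofReal (max r 0) * H (A ∩ B) + ENNReal.ofReal (max r 0) * H (A \ B)) := by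
          ring
  -- pass to real numbers and conclude
  have hmulnetop : ∀ m : Measure (Fin d → ℝ), ∀ E, IsProbabilityMeasure m →
      ENNReal.ofReal (max r 0) * m E ≠ ⊤ :=
    fun m E _ => ENNReal.mul_ne_top ENNReal.ofReal_ne_top (measure_ne_top _ _)
  have hrealNP : (G A).toReal + (max r 0) * (H B).toReal
      ≤ (G B).toReal + (max r 0) * (H A).toReal := by
    have h := ENNReal.toReal_mono (ENNReal.add_ne_top.mpr ⟨measure_ne_top _ _,
      hmulnetop H A inferInstance⟩) hNP
    rwa [ENNReal.toReal_add (measure_ne_top _ _) (hmulnetop H B inferInstance),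
      ENNReal.toReal_add (measure_ne_top _ _) (hmulnetop H A inferInstance),
      ENNReal.toReal_mul, ENNReal.toReal_mul, ENNReal.toReal_ofReal hcnn] at h
  have hmass : p * (G A).toReal + (1 - p) * (H A).toReal
      = p * (G B).toReal + (1 - p) * (H B).toReal := by
    have hA' := congrArg ENNReal.toReal hmassA
    have hB' := congrArg ENNReal.toReal hmassB
    rw [ENNReal.toReal_add (ENNReal.mul_ne_top ENNReal.ofReal_ne_top (measure_ne_top _ _))
        (ENNReal.mul_ne_top ENNReal.ofReal_ne_top (measure_ne_top _ _)),
      ENNReal.toReal_mul, ENNReal.toReal_mul,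
      ENNReal.toReal_ofReal hp.1.le, ENNReal.toReal_ofReal (by linarith [hp.2] : (0:ℝ) ≤ 1 - p)]
        at hA' hB'
    rw [hA', hB']
  have hfinal : (G A).toReal ≤ (G B).toReal := by
    set a := (G A).toReal
    set a' := (G B).toReal
    set b := (H A).toReal
    set b' := (H B).toReal
    set c := max r 0
    have hc2 : c * (p * a + (1 - p) * b) = c * (p * a' + (1 - p) * b') := by rw [hmass]
    have key : ((1:ℝ) - p + c * p) * (a - a') ≤ 0 := by
      nlinarith [mul_le_mul_of_nonneg_left hrealNP (by linarith [hp.2] : (0:ℝ) ≤ 1 - p), hc2]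
    have hpos : 0 < (1:ℝ) - p + c * p := by nlinarith [hp.1, hp.2, hcnn]
    by_contra hcon
    push_neg at hcon
    nlinarith [mul_pos hpos (sub_pos.mpr hcon)]
  exact (ENNReal.toReal_le_toReal (measure_ne_top _ _) (measure_ne_top _ _)).mp hfinal
open scoped Topology in
/-- Monotone comparison lemma: if the upper level sets of `U` are dominated by those of `V`, then
the expectation of a bounded monotone function of `U` is dominated by that of `V`. -/
lemma mono_approx {Ω : Type*} [MeasurableSpace Ω] (μ : Measure Ω) [IsProbabilityMeasure μ]
    (U V : Ω → ℝ) (hU : Measurable U) (hV : Measurable V)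
    (hUmem : ∀ x, U x ∈ Set.Icc (0:ℝ) 1) (hVmem : ∀ x, V x ∈ Set.Icc (0:ℝ) 1)
    (φ' : ℝ → ℝ) (hmono : Monotone φ') (hmeas : Measurable φ')
    (B : ℝ) (hbdd : ∀ u ∈ Set.Icc (0:ℝ) 1, |φ' u| ≤ B)
    (hcomp : ∀ t : ℝ, 0 < t → μ {x | t ≤ U x} ≤ μ {x | t ≤ V x})
    (hUatom : ∀ u : ℝ, μ {x | U x = u} = 0) (hVatom : ∀ u : ℝ, μ {x | V x = u} = 0) :
    ∫ x, φ' (U x) ∂μ ≤ ∫ x, φ' (V x) ∂μ := by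
  classical
  -- the step approximations
  set Sn : ℕ → ℝ → ℝ := fun n u => φ' 0 + ∑ k ∈ Finset.range n,
    (if ((k:ℝ)+1)/n ≤ u then (φ' (((k:ℝ)+1)/n) - φ' ((k:ℝ)/n)) else 0) with hSn
  -- closed form
  have closed_form : ∀ n : ℕ, 0 < n → ∀ u : ℝ, u ∈ Set.Icc (0:ℝ) 1 →
      Sn n u = φ' (((min n ⌊(n:ℝ)*u⌋₊ : ℕ) : ℝ)/n) := by
    intro n hn u hu
    have hnR : (0:ℝ) < n := by exact_mod_cast hn
    set m : ℕ := min n ⌊(n:ℝ)*u⌋₊ with hm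
    have hmn : m ≤ n := min_le_left _ _
    have hcond : ∀ k ∈ Finset.range n, (((k:ℝ)+1)/n ≤ u ↔ k < m) := by
      intro k hk
      rw [Finset.mem_range] at hk
      constructor
      · intro h
        have h1 : (k:ℝ)+1 ≤ (n:ℝ)*u := by
          rw [div_le_iff₀ hnR] at h; linarith [h]
        have h2 : k+1 ≤ ⌊(n:ℝ)*u⌋₊ := Nat.le_floor (by push_cast; linarith)
        exact lt_min hk (Nat.lt_of_succ_le h2)
      · intro h
        have h2 : k + 1 ≤ ⌊(n:ℝ)*u⌋₊ := Nat.succ_le_of_lt (lt_of_lt_of_le h (min_le_right _ _))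
        have h3 : ((k:ℝ)+1) ≤ (n:ℝ)*u := by
          have := Nat.floor_le (mul_nonneg hnR.le hu.1)
          calc ((k:ℝ)+1) = ((k+1 : ℕ) : ℝ) := by push_cast; ring
            _ ≤ (⌊(n:ℝ)*u⌋₊ : ℝ) := by exact_mod_cast h2
            _ ≤ (n:ℝ)*u := this
        rw [div_le_iff₀ hnR]
        linarith [h3]
    have hsum : ∑ k ∈ Finset.range n,
        (if ((k:ℝ)+1)/n ≤ u then (φ' (((k:ℝ)+1)/n) - φ' ((k:ℝ)/n)) else 0)
        = ∑ k ∈ Finset.range m, (φ' (((k:ℝ)+1)/n) - φ' ((k:ℝ)/n)) := by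
      rw [Finset.sum_congr rfl (fun k hk => by
        rw [if_congr (hcond k hk) rfl rfl])]
      rw [← Finset.sum_subset (Finset.range_subset_range.mpr hmn) (fun k _ hk => by
        rw [if_neg (by simpa using hk)])]
      exact Finset.sum_congr rfl fun k hk => if_pos (Finset.mem_range.mp hk)
    have htel : ∑ k ∈ Finset.range m, (φ' (((k:ℝ)+1)/n) - φ' ((k:ℝ)/n))
        = φ' ((m:ℝ)/n) - φ' 0 := by
      have h := Finset.sum_range_sub (fun k : ℕ => φ' ((k:ℝ)/n)) m
      simp only [Nat.cast_add, Nat.cast_one, Nat.cast_zero, zero_div] at h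
      exact h
    rw [hSn]
    simp only [hsum, htel]
    push_cast
    ring_nf
  -- integral formula and comparison for each step function
  have step_le : ∀ n : ℕ, 0 < n → ∫ x, Sn n (U x) ∂μ ≤ ∫ x, Sn n (V x) ∂μ := by
    intro n hn
    have hint : ∀ (W : Ω → ℝ), Measurable W →
        ∫ x, Sn n (W x) ∂μ = φ' 0 + ∑ k ∈ Finset.range n,
          (μ {x | ((k:ℝ)+1)/n ≤ W x}).toReal * (φ' (((k:ℝ)+1)/n) - φ' ((k:ℝ)/n)) := by
      intro W hW
      have hrewrite : ∀ k : ℕ, (fun x => if ((k:ℝ)+1)/n ≤ W x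
          then (φ' (((k:ℝ)+1)/n) - φ' ((k:ℝ)/n)) else 0)
          = Set.indicator {x | ((k:ℝ)+1)/n ≤ W x}
              (fun _ => (φ' (((k:ℝ)+1)/n) - φ' ((k:ℝ)/n))) := by
        intro k; funext x
        rw [Set.indicator_apply]
        rfl
      have hmeasset : ∀ k : ℕ, MeasurableSet {x | ((k:ℝ)+1)/n ≤ W x} := by
        intro k
        exact measurableSet_le measurable_const hW
      have hintegrable : ∀ k ∈ Finset.range n, Integrable (fun x =>
          Set.indicator {x | ((k:ℝ)+1)/n ≤ W x}
            (fun _ => (φ' (((k:ℝ)+1)/n) - φ' ((k:ℝ)/n))) x) μ :=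
        fun k _ => (integrable_const _).indicator (hmeasset k)
      calc ∫ x, Sn n (W x) ∂μ
          = ∫ x, (φ' 0 + ∑ k ∈ Finset.range n,
              Set.indicator {x | ((k:ℝ)+1)/n ≤ W x}
                (fun _ => (φ' (((k:ℝ)+1)/n) - φ' ((k:ℝ)/n))) x) ∂μ := by
            refine integral_congr_ae (Filter.Eventually.of_forall fun x => ?_)
            rw [hSn]
            congr 1
        _ = φ' 0 + ∑ k ∈ Finset.range n, ∫ x,
              Set.indicator {x | ((k:ℝ)+1)/n ≤ W x}
                (fun _ => (φ' (((k:ℝ)+1)/n) - φ' ((k:ℝ)/n))) x ∂μ := by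
            rw [integral_add (integrable_const _) (integrable_finset_sum _ hintegrable),
              integral_const, integral_finset_sum _ hintegrable]
            simp
        _ = φ' 0 + ∑ k ∈ Finset.range n,
              (μ {x | ((k:ℝ)+1)/n ≤ W x}).toReal * (φ' (((k:ℝ)+1)/n) - φ' ((k:ℝ)/n)) := by
            congr 1
            refine Finset.sum_congr rfl fun k _ => ?_
            rw [integral_indicator_const _ (hmeasset k), smul_eq_mul, measureReal_def]
    rw [hint U hU, hint V hV]
    refine add_le_add_right (Finset.sum_le_sum fun k hk => ?_) _
    have hnR : (0:ℝ) < n := by exact_mod_cast hn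
    have hdpos : 0 ≤ φ' (((k:ℝ)+1)/n) - φ' ((k:ℝ)/n) :=
      sub_nonneg.mpr (hmono (by gcongr <;> linarith))
    refine mul_le_mul_of_nonneg_right ?_ hdpos
    refine ENNReal.toReal_mono (measure_ne_top _ _) (hcomp _ ?_)
    positivity
  -- convergence of the step approximations
  have conv : ∀ (W : Ω → ℝ), Measurable W → (∀ x, W x ∈ Set.Icc (0:ℝ) 1) →
      (∀ u : ℝ, μ {x | W x = u} = 0) →
      Filter.Tendsto (fun n : ℕ => ∫ x, Sn (n+1) (W x) ∂μ) Filter.atTop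
        (𝓝 (∫ x, φ' (W x) ∂μ)) := by
    intro W hW hWmem hWatom
    have hmeasSn : ∀ n : ℕ, AEStronglyMeasurable (fun x => Sn (n+1) (W x)) μ := by
      intro n
      refine Measurable.aestronglyMeasurable ?_
      rw [hSn]
      refine (measurable_const.add (Finset.measurable_sum _ fun k _ => ?_))
      exact Measurable.ite (measurableSet_le measurable_const hW)
        measurable_const measurable_const
    have hboundSn : ∀ n : ℕ, ∀ᵐ x ∂μ, ‖Sn (n+1) (W x)‖ ≤ B := by
      intro n
      refine Filter.Eventually.of_forall fun x => ?_
      rw [closed_form (n+1) (Nat.succ_pos n) (W x) (hWmem x), Real.norm_eq_abs]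
      refine hbdd _ ⟨by positivity, ?_⟩
      rw [div_le_one (by positivity)]
      exact_mod_cast min_le_left _ _
    set D : Set ℝ := {u | ¬ContinuousWithinAt φ' (Set.Iio u) u} with hD
    have hDcount : D.Countable := by
      simpa using (hmono.monotoneOn univ).countable_not_continuousWithinAt_Iio
    have hDnull : μ {x | W x ∈ D} = 0 := by
      have hsub : {x | W x ∈ D} ⊆ ⋃ u ∈ D, {x | W x = u} :=
        fun x hx => Set.mem_biUnion hx rfl
      exact measure_mono_null hsub
        ((measure_biUnion_null_iff hDcount).mpr fun u _ => hWatom u)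
    have hae : ∀ᵐ x ∂μ, Filter.Tendsto (fun n : ℕ => Sn (n+1) (W x)) Filter.atTop
        (𝓝 (φ' (W x))) := by
      rw [ae_iff]
      refine measure_mono_null (fun x hx => ?_) hDnull
      simp only [Set.mem_setOf_eq] at hx ⊢
      by_contra hxD
      apply hx
      set u := W x with hu
      have hmem : u ∈ Set.Icc (0:ℝ) 1 := hWmem x
      have hcwa : ContinuousWithinAt φ' (Set.Iic u) u := by
        have h1 : ContinuousWithinAt φ' (Set.Iio u) u := not_not.mp hxD
        have h2 : ContinuousWithinAt φ' {u} u := continuousWithinAt_singleton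
        have h3 := h1.union h2
        rwa [Set.Iio_union_right] at h3
      set seq : ℕ → ℝ := fun n => ((min (n+1) ⌊((n+1:ℕ):ℝ)*u⌋₊ : ℕ) : ℝ)/((n+1:ℕ):ℝ) with hseq
      have hseq_le : ∀ n : ℕ, seq n ≤ u := by
        intro n
        have hpos : (0:ℝ) < ((n+1:ℕ):ℝ) := by positivity
        rw [hseq, div_le_iff₀ hpos]
        calc ((min (n+1) ⌊((n+1:ℕ):ℝ)*u⌋₊ : ℕ) : ℝ) ≤ (⌊((n+1:ℕ):ℝ)*u⌋₊ : ℝ) := by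
              exact_mod_cast min_le_right _ _
          _ ≤ ((n+1:ℕ):ℝ)*u := Nat.floor_le (mul_nonneg hpos.le hmem.1)
          _ = u * ((n+1:ℕ):ℝ) := mul_comm _ _
      have hseq_ge : ∀ n : ℕ, u - 1/((n+1:ℕ):ℝ) ≤ seq n := by
        intro n
        have hpos : (0:ℝ) < ((n+1:ℕ):ℝ) := by positivity
        rcases le_or_gt (n+1 : ℕ) ⌊((n+1:ℕ):ℝ)*u⌋₊ with h | h
        · have hminl : min (n+1) ⌊((n+1:ℕ):ℝ)*u⌋₊ = n+1 := min_eq_left h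
          rw [hseq]
          simp only [hminl]
          rw [div_self hpos.ne']
          have h1 : 0 < 1/((n+1:ℕ):ℝ) := by positivity
          linarith [hmem.2]
        · have hminr : min (n+1) ⌊((n+1:ℕ):ℝ)*u⌋₊ = ⌊((n+1:ℕ):ℝ)*u⌋₊ := min_eq_right h.le
          rw [hseq]
          simp only [hminr]
          have h2 : ((n+1:ℕ):ℝ)*u - 1 ≤ (⌊((n+1:ℕ):ℝ)*u⌋₊ : ℝ) := by
            linarith [Nat.lt_floor_add_one (((n+1:ℕ):ℝ)*u)]
          have h3 : u - 1/((n+1:ℕ):ℝ) = (((n+1:ℕ):ℝ)*u - 1)/((n+1:ℕ):ℝ) := by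
            field_simp
          rw [h3]
          gcongr
      have hlow : Filter.Tendsto (fun n : ℕ => u - 1/((n+1:ℕ):ℝ)) Filter.atTop (𝓝 u) := by
        have h0 : Filter.Tendsto (fun n : ℕ => 1/((n:ℝ)+1)) Filter.atTop (𝓝 0) :=
          tendsto_one_div_add_atTop_nhds_zero_nat
        have := tendsto_const_nhds (x := u) (f := Filter.atTop (α := ℕ)) |>.sub h0
        simp only [sub_zero] at this
        refine this.congr fun n => ?_
        push_cast
        ring
      have htend : Filter.Tendsto seq Filter.atTop (𝓝 u) :=
        tendsto_of_tendsto_of_tendsto_of_le_of_le hlow tendsto_const_nhds hseq_ge hseq_le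
      have hseqin : Filter.Tendsto seq Filter.atTop (nhdsWithin u (Set.Iic u)) :=
        tendsto_nhdsWithin_iff.mpr ⟨htend, Filter.Eventually.of_forall hseq_le⟩
      have hφseq : Filter.Tendsto (fun n => φ' (seq n)) Filter.atTop (𝓝 (φ' u)) :=
        (hcwa.tendsto).comp hseqin
      refine hφseq.congr fun n => ?_
      rw [closed_form (n+1) (Nat.succ_pos n) u hmem]
    exact tendsto_integral_of_dominated_convergence (fun _ => B) hmeasSn
      (integrable_const B) hboundSn hae
  exact le_of_tendsto_of_tendsto' (conv U hU hUmem hUatom) (conv V hV hVmem hVatom)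
    (fun n => step_le (n+1) (Nat.succ_pos n))
/-- the likelihood ratio `Ψ = dG/dH` maximizes the `W_φ`-ranking performance
over all scoring functions with continuous pooled score distribution. -/
theorem stmt2 {d : ℕ} (G H : Measure (Fin d → ℝ))
    [IsProbabilityMeasure G] [IsProbabilityMeasure H]
    (p : ℝ) (hp : p ∈ Set.Ioo (0 : ℝ) 1)
    (Ψ : (Fin d → ℝ) → ℝ) (hΨmeas : Measurable Ψ)
    (hac : G ≪ H)
    (hΨ : G = H.withDensity fun x => ENNReal.ofReal (Ψ x))
    (φ : ℝ → ℝ) (hφmono : MonotoneOn φ (Set.Icc 0 1)) (hφmeas : Measurable φ)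
    (B : ℝ) (hφbdd : ∀ u ∈ Set.Icc (0 : ℝ) 1, |φ u| ≤ B)
    (s : (Fin d → ℝ) → ℝ) (hs : Measurable s)
    (hFs : Continuous (pooledCDF G H p s))
    (hFΨ : Continuous (pooledCDF G H p Ψ)) :
    Wperf G H p φ s ≤ Wperf G H p φ Ψ := by
  have hprobs := pooledM_prob (G := G) (H := H) hp hs
  have hprobΨ := pooledM_prob (G := G) (H := H) hp hΨmeas
  -- the monotone extension of φ
  set π : ℝ → ℝ := fun u => max 0 (min u 1) with hπ
  have hπmem : ∀ u, π u ∈ Set.Icc (0:ℝ) 1 :=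
    fun u => ⟨le_max_left _ _, max_le zero_le_one (min_le_right _ _)⟩
  have hπid : ∀ u ∈ Set.Icc (0:ℝ) 1, π u = u := by
    intro u hu
    rw [hπ]
    simp only [min_eq_left hu.2, max_eq_right hu.1]
  have hπmono : Monotone π :=
    fun x y hxy => max_le_max le_rfl (min_le_min hxy le_rfl)
  have hπmeas : Measurable π :=
    measurable_const.max (measurable_id.min measurable_const)
  set φ' : ℝ → ℝ := fun u => φ (π u) with hφ'
  have hφ'mono : Monotone φ' :=
    fun x y hxy => hφmono (hπmem x) (hπmem y) (hπmono hxy)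
  have hφ'meas : Measurable φ' := hφmeas.comp hπmeas
  have hφ'bdd : ∀ u ∈ Set.Icc (0:ℝ) 1, |φ' u| ≤ B :=
    fun u _ => hφbdd (π u) (hπmem u)
  -- the pooled score variables
  set U : (Fin d → ℝ) → ℝ := fun x => pooledCDF G H p s (s x) with hU
  set V : (Fin d → ℝ) → ℝ := fun x => pooledCDF G H p Ψ (Ψ x) with hV
  have hUmeas : Measurable U := hFs.measurable.comp hs
  have hVmeas : Measurable V := hFΨ.measurable.comp hΨmeas
  have hUmem : ∀ x, U x ∈ Set.Icc (0:ℝ) 1 := by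
    intro x
    rw [hU]
    simp only [pooledCDF_eq_cdf hp hs]
    exact ⟨cdf_nonneg _ _, cdf_le_one _ _⟩
  have hVmem : ∀ x, V x ∈ Set.Icc (0:ℝ) 1 := by
    intro x
    rw [hV]
    simp only [pooledCDF_eq_cdf hp hΨmeas]
    exact ⟨cdf_nonneg _ _, cdf_le_one _ _⟩
  have hWs : Wperf G H p φ s = ∫ x, φ' (U x) ∂G := by
    refine integral_congr_ae (Filter.Eventually.of_forall fun x => ?_)
    rw [hφ']
    simp only []
    rw [hπid (U x) (hUmem x)]
  have hWΨ : Wperf G H p φ Ψ = ∫ x, φ' (V x) ∂G := by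
    refine integral_congr_ae (Filter.Eventually.of_forall fun x => ?_)
    rw [hφ']
    simp only []
    rw [hπid (V x) (hVmem x)]
  rw [hWs, hWΨ]
  refine mono_approx G U V hUmeas hVmeas hUmem hVmem φ' hφ'mono hφ'meas B hφ'bdd
    (fun t ht => ?_) (fun u => ?_) (fun u => ?_)
  · exact keyNP G H p hp Ψ hΨmeas hΨ s hs hFs hFΨ t ht
  · exact atom_zero hp hs hFs u
  · exact atom_zero hp hΨmeas hFΨ u
end
end

section
/- Suppose φ satisfies Assumption A2, S₀ is a countable class of scoring functions satisfying Assumption A1(M) for some M > 0, and write ‖φ‖_∞, ‖φ'‖_∞, ‖φ''‖_∞ for the sup-norms of φ, φ', φ'' over [0,1]. Then for every t > 0, P{ sup_{s∈S₀} |W_φ(s) − Ŵ^φ_{n,m}(s)/n| ≥ E[ sup_{s∈S₀} |W_φ(s) − Ŵ^φ_{n,m}(s)/n| ] + t } ≤ exp( − p²·N·t² / ( 6·(‖φ‖_∞² + 9·‖φ'‖_∞² + 9·‖φ''‖_∞²) ) ). -/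
open MeasureTheory
open scoped ENNReal

noncomputable section

/-- rank of `x i` in the pooled sample. -/
def Rank {n m : ℕ} (x : Fin n → ℝ) (y : Fin m → ℝ) (i : Fin n) : ℕ :=
  (Finset.univ.filter fun k => x k ≤ x i).card +
    (Finset.univ.filter fun j => y j ≤ x i).card

/-- two-sample linear rank statistic `Ŵ^φ_{n,m}`. -/
def Wemp {n m : ℕ} (φ : ℝ → ℝ) (x : Fin n → ℝ) (y : Fin m → ℝ) : ℝ :=
  ∑ i : Fin n, φ ((Rank x y i : ℝ) / ((n : ℝ) + (m : ℝ) + 1))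

/-- Assumption A1(M): the score distribution has a twice differentiable Lebesgue
density with all sup-norms bounded by `M`. -/
def HasSmoothDensity {d : ℕ} (μ : Measure (Fin d → ℝ)) (s : (Fin d → ℝ) → ℝ)
    (M : ℝ) : Prop :=
  ∃ f f1 f2 : ℝ → ℝ,
    μ.map s = MeasureTheory.volume.withDensity (fun t => ENNReal.ofReal (f t)) ∧
    (∀ t, HasDerivAt f (f1 t) t) ∧ (∀ t, HasDerivAt f1 (f2 t) t) ∧
    (∀ t, |f t| ≤ M ∧ |f1 t| ≤ M ∧ |f2 t| ≤ M)


/-- sup-norm over `[0,1]`. -/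
def supNormIcc (f : ℝ → ℝ) : ℝ :=
  ⨆ u : Set.Icc (0 : ℝ) 1, |f u|


lemma monoAux (F F' : ℝ → ℝ) (hF : ∀ x, HasDerivAt F (F' x) x)
    (h0 : ∀ x, 0 ≤ x → 0 ≤ F' x) {u : ℝ} (hu : 0 ≤ u) : F 0 ≤ F u := by
  have hmono : MonotoneOn F (Set.Ici 0) := by
    apply monotoneOn_of_deriv_nonneg (convex_Ici 0)
    · exact fun x _ => (hF x).differentiableAt.continuousAt.continuousWithinAt
    · exact fun x _ => ((hF x).differentiableAt).differentiableWithinAt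
    · intro x hx
      rw [(hF x).deriv]
      exact h0 x (le_of_lt (by simpa [interior_Ici] using hx))
  exact hmono Set.self_mem_Ici hu hu

lemma coshLe (u : ℝ) : Real.cosh u ≤ Real.exp (u ^ 2 / 2) := by
  suffices h : ∀ v : ℝ, 0 ≤ v → Real.cosh v ≤ Real.exp (v ^ 2 / 2) by
    rcases le_total 0 u with hu | hu
    · exact h u hu
    · have := h (-u) (by linarith)
      simpa [Real.cosh_neg, neg_sq] using this
  intro v hv
  have h1 : ∀ x : ℝ, 0 ≤ x → Real.sinh x ≤ x * Real.cosh x := by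
    intro x hx
    have := monoAux (fun x => x * Real.cosh x - Real.sinh x)
      (fun x => x * Real.sinh x)
      (fun x => by
        have h := ((hasDerivAt_id x).mul (Real.hasDerivAt_cosh x)).sub
          (Real.hasDerivAt_sinh x)
        refine h.congr_deriv ?_
        simp [mul_comm])
      (fun x hx => mul_nonneg hx (by simpa using Real.sinh_nonneg_iff.mpr hx)) hx
    simp at this
    linarith
  have h2 : Real.log (Real.cosh v) ≤ v ^ 2 / 2 := by
    have := monoAux (fun x => x ^ 2 / 2 - Real.log (Real.cosh x))
      (fun x => x - Real.sinh x / Real.cosh x)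
      (fun x => by
        have hd1 : HasDerivAt (fun x : ℝ => x ^ 2 / 2) x x := by
          have := (hasDerivAt_pow 2 x).div_const 2
          refine this.congr_deriv ?_
          ring
        have hd2 : HasDerivAt (fun x => Real.log (Real.cosh x))
            (Real.sinh x / Real.cosh x) x :=
          (Real.hasDerivAt_cosh x).log (Real.cosh_pos x).ne'
        exact hd1.sub hd2)
      (fun x hx => by
        have := h1 x hx
        have hc := Real.cosh_pos x
        rw [sub_nonneg, div_le_iff₀ hc]
        linarith) hv
    simp [Real.cosh_zero] at this
    linarith
  calc Real.cosh v = Real.exp (Real.log (Real.cosh v)) :=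
        (Real.exp_log (Real.cosh_pos v)).symm
    _ ≤ Real.exp (v ^ 2 / 2) := Real.exp_le_exp.mpr h2

lemma intBdd {α : Type*} [MeasurableSpace α] {μ : Measure α} [IsFiniteMeasure μ]
    {f : α → ℝ} (hf : AEStronglyMeasurable f μ) {C : ℝ} (h : ∀ x, |f x| ≤ C) :
    Integrable f μ :=
  (integrable_const C).mono' hf (ae_of_all _ (by simpa [Real.norm_eq_abs] using h))

lemma hoeffLite {α : Type*} [MeasurableSpace α] (μ : Measure α) [IsProbabilityMeasure μ]
    (h : α → ℝ) (hm : Measurable h) (c : ℝ) (hc0 : 0 ≤ c) (hb : ∀ a, |h a| ≤ c)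
    (h0 : ∫ a, h a ∂μ = 0) (l : ℝ) :
    ∫ a, Real.exp (l * h a) ∂μ ≤ Real.exp (l ^ 2 * c ^ 2 / 2) := by
  rcases eq_or_lt_of_le hc0 with hc | hc
  · have hz : ∀ a, h a = 0 := fun a => abs_nonpos_iff.mp (hc ▸ hb a)
    simp [hz]
    positivity
  · have key : ∀ a, Real.exp (l * h a)
        ≤ Real.cosh (l * c) + (h a / c) * Real.sinh (l * c) := by
      intro a
      obtain ⟨hx1, hx2⟩ := abs_le.1 (hb a)
      have hθ1 : (0:ℝ) ≤ (c - h a) / (2 * c) := div_nonneg (by linarith) (by linarith)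
      have hθ2 : (0:ℝ) ≤ (c + h a) / (2 * c) := div_nonneg (by linarith) (by linarith)
      have hθs : (c - h a) / (2 * c) + (c + h a) / (2 * c) = 1 := by
        field_simp; ring
      have hcvx := convexOn_exp.2 (Set.mem_univ (-(l * c))) (Set.mem_univ (l * c))
        hθ1 hθ2 hθs
      simp only [smul_eq_mul] at hcvx
      have harg : (c - h a) / (2 * c) * (-(l * c)) + (c + h a) / (2 * c) * (l * c)
          = l * h a := by field_simp; ring
      rw [harg] at hcvx
      refine hcvx.trans (le_of_eq ?_)
      rw [Real.cosh_eq, Real.sinh_eq]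
      field_simp
      ring
    have hint1 : Integrable (fun a => Real.exp (l * h a)) μ := by
      refine intBdd (Real.continuous_exp.measurable.comp
        (hm.const_mul l)).aestronglyMeasurable (C := Real.exp (|l| * c)) fun a => ?_
      rw [abs_of_pos (Real.exp_pos _)]
      refine Real.exp_le_exp.mpr ?_
      calc l * h a ≤ |l * h a| := le_abs_self _
        _ = |l| * |h a| := abs_mul _ _
        _ ≤ |l| * c := by nlinarith [abs_nonneg l, hb a]
    have hinth : Integrable h μ := intBdd hm.aestronglyMeasurable hb
    have hint2 : Integrable
        (fun a => Real.cosh (l * c) + (h a / c) * Real.sinh (l * c)) μ :=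
      (integrable_const _).add ((hinth.div_const c).mul_const _)
    calc ∫ a, Real.exp (l * h a) ∂μ
        ≤ ∫ a, (Real.cosh (l * c) + (h a / c) * Real.sinh (l * c)) ∂μ :=
          integral_mono hint1 hint2 key
      _ = Real.cosh (l * c) := by
          rw [integral_add (integrable_const _) ((hinth.div_const c).mul_const _),
            integral_const, integral_mul_const, integral_div, h0]
          simp
      _ ≤ Real.exp ((l * c) ^ 2 / 2) := coshLe _
      _ = Real.exp (l ^ 2 * c ^ 2 / 2) := by rw [mul_pow]

lemma tensorMgf {α β : Type*} [MeasurableSpace α] [MeasurableSpace β]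
    (μ : Measure α) (ν : Measure β) [IsProbabilityMeasure μ] [IsProbabilityMeasure ν]
    (f : α × β → ℝ) (hf : Measurable f) (B : ℝ) (hB : ∀ z, |f z| ≤ B)
    (l a b : ℝ)
    (H1 : ∀ y, ∫ x, Real.exp (l * (f (x, y) - ∫ x', f (x', y) ∂μ)) ∂μ ≤ Real.exp a)
    (H2 : ∫ y, Real.exp (l * ((∫ x, f (x, y) ∂μ)
        - ∫ y', ∫ x, f (x, y') ∂μ ∂ν)) ∂ν ≤ Real.exp b) :
    ∫ z, Real.exp (l * (f z - ∫ z', f z' ∂(μ.prod ν))) ∂(μ.prod ν)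
      ≤ Real.exp (a + b) := by
  set g : β → ℝ := fun y => ∫ x, f (x, y) ∂μ with hgdef
  set Ef : ℝ := ∫ z, f z ∂(μ.prod ν) with hEfdef
  have hfsm : StronglyMeasurable f := hf.stronglyMeasurable
  have hfint : Integrable f (μ.prod ν) := intBdd hf.aestronglyMeasurable hB
  have hgsm : StronglyMeasurable g := hfsm.integral_prod_left'
  have hgB : ∀ y, |g y| ≤ B := by
    intro y
    have := norm_integral_le_of_norm_le_const (μ := μ)
      (f := fun x => f (x, y)) (C := B) (ae_of_all _ fun x => by
        simpa [Real.norm_eq_abs] using hB (x, y))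
    simpa [Real.norm_eq_abs] using this
  have hEf : Ef = ∫ y, g y ∂ν := integral_prod_symm f hfint
  -- the exp integrand on the product
  have hexpmeas : Measurable fun z => Real.exp (l * (f z - Ef)) :=
    Real.continuous_exp.measurable.comp ((hf.sub measurable_const).const_mul l)
  have hexpB : ∀ z, |Real.exp (l * (f z - Ef))| ≤ Real.exp (|l| * (B + |Ef|)) := by
    intro z
    rw [abs_of_pos (Real.exp_pos _)]
    refine Real.exp_le_exp.mpr ?_
    calc l * (f z - Ef) ≤ |l * (f z - Ef)| := le_abs_self _
      _ = |l| * |f z - Ef| := abs_mul _ _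
      _ ≤ |l| * (B + |Ef|) := by
          have h1 : |f z - Ef| ≤ |f z| + |Ef| := abs_sub _ _
          nlinarith [abs_nonneg l, hB z, abs_nonneg (f z)]
  have hexpint : Integrable (fun z => Real.exp (l * (f z - Ef))) (μ.prod ν) :=
    intBdd hexpmeas.aestronglyMeasurable hexpB
  have key : ∫ z, Real.exp (l * (f z - Ef)) ∂(μ.prod ν)
      = ∫ y, ∫ x, Real.exp (l * (f (x, y) - Ef)) ∂μ ∂ν :=
    integral_prod_symm _ hexpint
  -- pointwise bound for the inner integral
  have hpt : ∀ y, ∫ x, Real.exp (l * (f (x, y) - Ef)) ∂μ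
      ≤ Real.exp a * Real.exp (l * (g y - Ef)) := by
    intro y
    have heq : ∀ x : α, Real.exp (l * (f (x, y) - Ef))
        = Real.exp (l * (f (x, y) - g y)) * Real.exp (l * (g y - Ef)) := by
      intro x
      rw [← Real.exp_add]
      ring_nf
    calc ∫ x, Real.exp (l * (f (x, y) - Ef)) ∂μ
        = ∫ x, Real.exp (l * (f (x, y) - g y)) * Real.exp (l * (g y - Ef)) ∂μ := by
          simp_rw [heq]
      _ = (∫ x, Real.exp (l * (f (x, y) - g y)) ∂μ) * Real.exp (l * (g y - Ef)) :=
          integral_mul_const _ _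
      _ ≤ Real.exp a * Real.exp (l * (g y - Ef)) :=
          mul_le_mul_of_nonneg_right (H1 y) (Real.exp_pos _).le
  -- integrability of both sides over ν
  have hinnersm : StronglyMeasurable fun y => ∫ x, Real.exp (l * (f (x, y) - Ef)) ∂μ :=
    hexpmeas.stronglyMeasurable.integral_prod_left'
  have hinnerB : ∀ y, |∫ x, Real.exp (l * (f (x, y) - Ef)) ∂μ|
      ≤ Real.exp (|l| * (B + |Ef|)) := by
    intro y
    have := norm_integral_le_of_norm_le_const (μ := μ)
      (f := fun x => Real.exp (l * (f (x, y) - Ef)))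
      (C := Real.exp (|l| * (B + |Ef|)))
      (ae_of_all _ fun x => by simpa [Real.norm_eq_abs] using hexpB (x, y))
    simpa [Real.norm_eq_abs] using this
  have hint1 : Integrable (fun y => ∫ x, Real.exp (l * (f (x, y) - Ef)) ∂μ) ν :=
    intBdd hinnersm.aestronglyMeasurable hinnerB
  have hint2 : Integrable (fun y => Real.exp a * Real.exp (l * (g y - Ef))) ν := by
    refine intBdd ((measurable_const.mul (Real.continuous_exp.measurable.comp
      ((hgsm.measurable.sub measurable_const).const_mul l))).aestronglyMeasurable)
      (C := Real.exp a * Real.exp (|l| * (B + |Ef|))) fun y => ?_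
    rw [abs_mul, abs_of_pos (Real.exp_pos a), abs_of_pos (Real.exp_pos _)]
    refine mul_le_mul_of_nonneg_left (Real.exp_le_exp.mpr ?_) (Real.exp_pos _).le
    calc l * (g y - Ef) ≤ |l * (g y - Ef)| := le_abs_self _
      _ = |l| * |g y - Ef| := abs_mul _ _
      _ ≤ |l| * (B + |Ef|) := by
          have h1 : |g y - Ef| ≤ |g y| + |Ef| := abs_sub _ _
          nlinarith [abs_nonneg l, hgB y, abs_nonneg (g y)]
  calc ∫ z, Real.exp (l * (f z - Ef)) ∂(μ.prod ν)
      = ∫ y, ∫ x, Real.exp (l * (f (x, y) - Ef)) ∂μ ∂ν := key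
    _ ≤ ∫ y, Real.exp a * Real.exp (l * (g y - Ef)) ∂ν :=
        integral_mono hint1 hint2 hpt
    _ = Real.exp a * ∫ y, Real.exp (l * (g y - Ef)) ∂ν := integral_const_mul _ _
    _ ≤ Real.exp a * Real.exp b := by
        refine mul_le_mul_of_nonneg_left ?_ (Real.exp_pos _).le
        rw [hEf] at *
        exact H2
    _ = Real.exp (a + b) := (Real.exp_add a b).symm

lemma piMgf {E : Type*} [MeasurableSpace E] (μ : Measure E) [IsProbabilityMeasure μ]
    (k : ℕ) (f : (Fin k → E) → ℝ) (hf : Measurable f) (B : ℝ) (hB0 : 0 ≤ B)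
    (hB : ∀ x, |f x| ≤ B) (c : ℝ) (hc : 0 ≤ c)
    (hdiff : ∀ (x x' : Fin k → E) (i : Fin k),
      (∀ j, j ≠ i → x j = x' j) → |f x - f x'| ≤ c) (l : ℝ) :
    ∫ x, Real.exp (l * (f x - ∫ x', f x' ∂(Measure.pi fun _ : Fin k => μ)))
        ∂(Measure.pi fun _ : Fin k => μ)
      ≤ Real.exp (l ^ 2 * ((k : ℝ) * c ^ 2) / 2) := by
  induction k with
  | zero =>
      have hconst : ∀ x x' : Fin 0 → E, x = x' := fun x x' =>
        funext fun i => i.elim0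
      have hf0 : f = fun _ => f (fun i => i.elim0) :=
        funext fun x => congrArg f (hconst _ _)
      rw [hf0]
      simp
  | succ k ih =>
      set πk := Measure.pi (fun _ : Fin k => μ) with hπk
      set π1 := Measure.pi (fun _ : Fin (k + 1) => μ) with hπ1
      set e := MeasurableEquiv.piFinSuccAbove (fun _ : Fin (k + 1) => E) 0 with he
      have hmp : MeasurePreserving e π1 (μ.prod πk) :=
        measurePreserving_piFinSuccAbove (fun _ : Fin (k + 1) => μ) 0
      set F : E × (Fin k → E) → ℝ := fun vz => f (e.symm vz) with hFdef
      have hsymm : ∀ (v : E) (z : Fin k → E), e.symm (v, z) = Fin.cons v z := by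
        intro v z
        funext j
        induction j using Fin.cases with
        | zero => simp [he, MeasurableEquiv.piFinSuccAbove]
        | succ i => simp [he, MeasurableEquiv.piFinSuccAbove]
      have hFmeas : Measurable F := hf.comp e.symm.measurable
      have hFB : ∀ z, |F z| ≤ B := fun z => hB _
      -- transfer the integrals
      have hInt : ∀ g : (Fin (k + 1) → E) → ℝ, Measurable g →
          ∫ x, g x ∂π1 = ∫ z, g (e.symm z) ∂(μ.prod πk) := by
        intro g _
        exact (MeasurePreserving.integral_comp' (hmp.symm e) g).symm
      have hfexpmeas : Measurable (fun x => Real.exp (l * (f x - ∫ x', f x' ∂π1))) :=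
        Real.continuous_exp.measurable.comp ((hf.sub measurable_const).const_mul l)
      have hEf : ∫ x, f x ∂π1 = ∫ z, F z ∂(μ.prod πk) := hInt f hf
      have htrans : ∫ x, Real.exp (l * (f x - ∫ x', f x' ∂π1)) ∂π1
          = ∫ z, Real.exp (l * (F z - ∫ z', F z' ∂(μ.prod πk))) ∂(μ.prod πk) := by
        rw [hInt _ hfexpmeas, hEf]
      have hsecmeas : ∀ y : Fin k → E, Measurable (fun v => F (v, y)) := fun y =>
        hFmeas.comp (measurable_id.prodMk measurable_const)
      have hsecint : ∀ y : Fin k → E, Integrable (fun v => F (v, y)) μ := fun y =>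
        intBdd (hsecmeas y).aestronglyMeasurable (fun v => hFB _)
      set g0 : (Fin k → E) → ℝ := fun y => ∫ v, F (v, y) ∂μ with hg0
      have hg0meas : Measurable g0 :=
        hFmeas.stronglyMeasurable.integral_prod_left'.measurable
      have hg0B : ∀ y, |g0 y| ≤ B := by
        intro y
        have := norm_integral_le_of_norm_le_const (μ := μ)
          (f := fun v => F (v, y)) (C := B)
          (ae_of_all _ fun v => by simpa [Real.norm_eq_abs] using hFB (v, y))
        simpa [Real.norm_eq_abs] using this
      have H1 : ∀ y, ∫ v, Real.exp (l * (F (v, y) - ∫ v', F (v', y) ∂μ)) ∂μ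
          ≤ Real.exp (l ^ 2 * c ^ 2 / 2) := by
        intro y
        have hkey : ∀ v v' : E, |F (v, y) - F (v', y)| ≤ c := by
          intro v v'
          simp only [hFdef, hsymm]
          refine hdiff _ _ 0 fun j hj => ?_
          rcases Fin.eq_zero_or_eq_succ j with rfl | ⟨i, rfl⟩
          · exact absurd rfl hj
          · simp
        have hdiffint : ∀ v : E, F (v, y) - g0 y = ∫ v', (F (v, y) - F (v', y)) ∂μ := by
          intro v
          rw [integral_sub (integrable_const _) (hsecint y), integral_const]
          simp [hg0]
        have hbound : ∀ v : E, |F (v, y) - g0 y| ≤ c := by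
          intro v
          rw [hdiffint v]
          have := norm_integral_le_of_norm_le_const (μ := μ)
            (f := fun v' => F (v, y) - F (v', y)) (C := c)
            (ae_of_all _ fun v' => by simpa [Real.norm_eq_abs] using hkey v v')
          simpa [Real.norm_eq_abs] using this
        have hmean : ∫ v, (F (v, y) - g0 y) ∂μ = 0 := by
          rw [integral_sub (hsecint y) (integrable_const _), integral_const]
          simp [hg0]
        exact hoeffLite μ (fun v => F (v, y) - g0 y)
          ((hsecmeas y).sub measurable_const) c hc hbound hmean l
      have H2 : ∫ y, Real.exp (l * (g0 y - ∫ y', g0 y' ∂πk)) ∂πk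
          ≤ Real.exp (l ^ 2 * ((k : ℝ) * c ^ 2) / 2) := by
        refine ih g0 hg0meas hg0B fun y y' i hyy' => ?_
        have hkey : ∀ v : E, |F (v, y) - F (v, y')| ≤ c := by
          intro v
          simp only [hFdef, hsymm]
          refine hdiff _ _ i.succ fun j hj => ?_
          rcases Fin.eq_zero_or_eq_succ j with rfl | ⟨i', rfl⟩
          · simp
          · simp only [Fin.cons_succ]
            exact hyy' i' fun h => hj (by rw [h])
        have hg0diff : g0 y - g0 y' = ∫ v, (F (v, y) - F (v, y')) ∂μ := by
          rw [integral_sub (hsecint y) (hsecint y')]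
        rw [hg0diff]
        have := norm_integral_le_of_norm_le_const (μ := μ)
          (f := fun v => F (v, y) - F (v, y')) (C := c)
          (ae_of_all _ fun v => by simpa [Real.norm_eq_abs] using hkey v)
        simpa [Real.norm_eq_abs] using this
      have hmain := tensorMgf μ πk F hFmeas B hFB l
        (l ^ 2 * c ^ 2 / 2) (l ^ 2 * ((k : ℝ) * c ^ 2) / 2) H1 H2
      rw [htrans]
      refine hmain.trans (le_of_eq ?_)
      congr 1
      push_cast
      ring

lemma supNormIcc_ge {f : ℝ → ℝ} (hf : Continuous f) {u : ℝ}
    (hu : u ∈ Set.Icc (0:ℝ) 1) : |f u| ≤ supNormIcc f := by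
  have hbdd : BddAbove (Set.range fun v : Set.Icc (0:ℝ) 1 => |f v|) := by
    obtain ⟨v0, hv0, hmax⟩ := isCompact_Icc.exists_isMaxOn
      (Set.nonempty_Icc.2 zero_le_one) (hf.abs.continuousOn)
    refine ⟨|f v0|, ?_⟩
    rintro _ ⟨w, rfl⟩
    exact isMaxOn_iff.1 hmax w w.2
  exact le_ciSup hbdd (⟨u, hu⟩ : Set.Icc (0:ℝ) 1)

lemma supNormIcc_nonneg {f : ℝ → ℝ} (hf : Continuous f) : 0 ≤ supNormIcc f :=
  le_trans (abs_nonneg _) (supNormIcc_ge hf (by norm_num : (0:ℝ) ∈ Set.Icc (0:ℝ) 1))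

lemma cardFilterDiff {n : ℕ} (p q : Fin n → Prop) [DecidablePred p] [DecidablePred q]
    (i : Fin n) (h : ∀ k, k ≠ i → (p k ↔ q k)) :
    (Finset.univ.filter p).card ≤ (Finset.univ.filter q).card + 1 := by
  classical
  have hsub : Finset.univ.filter p ⊆ insert i (Finset.univ.filter q) := by
    intro a ha
    simp only [Finset.mem_filter, Finset.mem_univ, true_and] at ha
    by_cases hai : a = i
    · simp [hai]
    · simp only [Finset.mem_insert, Finset.mem_filter, Finset.mem_univ, true_and]
      exact Or.inr ((h a hai).1 ha)
  calc (Finset.univ.filter p).card ≤ (insert i (Finset.univ.filter q)).card :=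
        Finset.card_le_card hsub
    _ ≤ (Finset.univ.filter q).card + 1 := Finset.card_insert_le _ _

lemma natDiffOne {a b : ℕ} (h1 : a ≤ b + 1) (h2 : b ≤ a + 1) :
    |(a : ℝ) - (b : ℝ)| ≤ 1 := by
  rw [abs_le]
  constructor
  · have := (Nat.cast_le (α := ℝ)).2 h2
    push_cast at this
    linarith
  · have := (Nat.cast_le (α := ℝ)).2 h1
    push_cast at this
    linarith

lemma rankLe {n m : ℕ} (x : Fin n → ℝ) (y : Fin m → ℝ) (i : Fin n) :
    Rank x y i ≤ n + m := by
  unfold Rank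
  have h1 := Finset.card_filter_le (Finset.univ : Finset (Fin n)) fun k => x k ≤ x i
  have h2 := Finset.card_filter_le (Finset.univ : Finset (Fin m)) fun j => y j ≤ x i
  simp only [Finset.card_univ, Fintype.card_fin] at h1 h2
  omega

lemma rank_mem {n m : ℕ} (x : Fin n → ℝ) (y : Fin m → ℝ) (i : Fin n) :
    (Rank x y i : ℝ) / ((n : ℝ) + (m : ℝ) + 1) ∈ Set.Icc (0:ℝ) 1 := by
  have hK : (0:ℝ) < (n : ℝ) + (m : ℝ) + 1 := by positivity
  constructor
  · positivity
  · rw [div_le_one hK]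
    have := (Nat.cast_le (α := ℝ)).2 (rankLe x y i)
    push_cast at this
    linarith

lemma supLip {ι : Sort*} (f g : ι → ℝ) (c : ℝ) (hc : 0 ≤ c)
    (hBf : BddAbove (Set.range f)) (hBg : BddAbove (Set.range g))
    (h : ∀ i, |f i - g i| ≤ c) : |(⨆ i, f i) - ⨆ i, g i| ≤ c := by
  rcases isEmpty_or_nonempty ι with hι | hι
  · simp [Real.iSup_of_isEmpty, hc]
  · rw [abs_le]
    constructor
    · rw [neg_le, neg_sub, sub_le_iff_le_add]
      refine ciSup_le fun i => ?_
      have h1 : g i ≤ f i + c := by have := abs_le.1 (h i); linarith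
      have h2 : f i ≤ ⨆ i, f i := le_ciSup hBf i
      linarith
    · rw [sub_le_iff_le_add]
      refine ciSup_le fun i => ?_
      have h1 : f i ≤ g i + c := by have := abs_le.1 (h i); linarith
      have h2 : g i ≤ ⨆ i, g i := le_ciSup hBg i
      linarith

lemma wempDiffX {n m : ℕ} (φ : ℝ → ℝ) (L : ℝ) (hL0 : 0 ≤ L)
    (hlip : ∀ a ∈ Set.Icc (0:ℝ) 1, ∀ b ∈ Set.Icc (0:ℝ) 1, |φ a - φ b| ≤ L * |a - b|)
    (u u' : Fin n → ℝ) (w : Fin m → ℝ) (i : Fin n)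
    (h : ∀ k, k ≠ i → u k = u' k) :
    |Wemp φ u w - Wemp φ u' w| ≤ 2 * L := by
  classical
  set K : ℝ := (n : ℝ) + (m : ℝ) + 1 with hK
  have hKpos : (0:ℝ) < K := by positivity
  have hterm : ∀ k : Fin n, k ≠ i →
      |φ ((Rank u w k : ℝ) / K) - φ ((Rank u' w k : ℝ) / K)| ≤ L / K := by
    intro k hk
    have hr1 : Rank u w k ≤ Rank u' w k + 1 := by
      unfold Rank
      have hcard : (Finset.univ.filter fun k' => u k' ≤ u k).card
          ≤ (Finset.univ.filter fun k' => u' k' ≤ u' k).card + 1 := by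
        refine cardFilterDiff _ _ i fun k' hk' => ?_
        rw [h k' hk', h k hk]
      have hsame : (Finset.univ.filter fun j => w j ≤ u k)
          = (Finset.univ.filter fun j => w j ≤ u' k) := by
        rw [h k hk]
      rw [hsame]
      omega
    have hr2 : Rank u' w k ≤ Rank u w k + 1 := by
      unfold Rank
      have hcard : (Finset.univ.filter fun k' => u' k' ≤ u' k).card
          ≤ (Finset.univ.filter fun k' => u k' ≤ u k).card + 1 := by
        refine cardFilterDiff _ _ i fun k' hk' => ?_
        rw [h k' hk', h k hk]
      have hsame : (Finset.univ.filter fun j => w j ≤ u k)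
          = (Finset.univ.filter fun j => w j ≤ u' k) := by
        rw [h k hk]
      rw [hsame]
      omega
    have habs : |(Rank u w k : ℝ) - (Rank u' w k : ℝ)| ≤ 1 := natDiffOne hr1 hr2
    calc |φ ((Rank u w k : ℝ) / K) - φ ((Rank u' w k : ℝ) / K)|
        ≤ L * |(Rank u w k : ℝ) / K - (Rank u' w k : ℝ) / K| :=
          hlip _ (rank_mem u w k) _ (rank_mem u' w k)
      _ = L * (|(Rank u w k : ℝ) - (Rank u' w k : ℝ)| / K) := by
          rw [div_sub_div_same, abs_div, abs_of_pos hKpos]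
      _ ≤ L * (1 / K) := by
          refine mul_le_mul_of_nonneg_left ?_ hL0
          gcongr
      _ = L / K := by ring
  have htermi : |φ ((Rank u w i : ℝ) / K) - φ ((Rank u' w i : ℝ) / K)| ≤ L := by
    have h1 := rank_mem u w i
    have h2 := rank_mem u' w i
    calc |φ ((Rank u w i : ℝ) / K) - φ ((Rank u' w i : ℝ) / K)|
        ≤ L * |(Rank u w i : ℝ) / K - (Rank u' w i : ℝ) / K| := hlip _ h1 _ h2
      _ ≤ L * 1 := by
          refine mul_le_mul_of_nonneg_left ?_ hL0
          rw [abs_le]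
          obtain ⟨ha1, ha2⟩ := h1
          obtain ⟨hb1, hb2⟩ := h2
          constructor <;> linarith
      _ = L := mul_one L
  have hsplit : Wemp φ u w - Wemp φ u' w
      = ∑ k : Fin n, (φ ((Rank u w k : ℝ) / K) - φ ((Rank u' w k : ℝ) / K)) := by
    unfold Wemp
    rw [← Finset.sum_sub_distrib]
  rw [hsplit]
  calc |∑ k : Fin n, (φ ((Rank u w k : ℝ) / K) - φ ((Rank u' w k : ℝ) / K))|
      ≤ ∑ k : Fin n, |φ ((Rank u w k : ℝ) / K) - φ ((Rank u' w k : ℝ) / K)| :=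
        Finset.abs_sum_le_sum_abs _ _
    _ = |φ ((Rank u w i : ℝ) / K) - φ ((Rank u' w i : ℝ) / K)|
        + ∑ k ∈ Finset.univ.erase i,
            |φ ((Rank u w k : ℝ) / K) - φ ((Rank u' w k : ℝ) / K)| :=
        (Finset.add_sum_erase _ _ (Finset.mem_univ i)).symm
    _ ≤ L + ∑ k ∈ Finset.univ.erase i, (L / K) := by
        refine add_le_add htermi (Finset.sum_le_sum fun k hk => ?_)
        exact hterm k (Finset.ne_of_mem_erase hk)
    _ ≤ L + L := by
        refine add_le_add_right ?_ L
        rw [Finset.sum_const, nsmul_eq_mul]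
        have hcard : ((Finset.univ.erase i).card : ℝ) ≤ K := by
          have h1 : (Finset.univ.erase i).card ≤ n := by
            calc (Finset.univ.erase i).card ≤ Finset.univ.card := Finset.card_erase_le ..
              _ = n := by simp
          have := (Nat.cast_le (α := ℝ)).2 h1
          rw [hK]
          have hm0 : (0:ℝ) ≤ (m:ℝ) := Nat.cast_nonneg m
          linarith
        calc ((Finset.univ.erase i).card : ℝ) * (L / K) ≤ K * (L / K) :=
              mul_le_mul_of_nonneg_right hcard (by positivity)
          _ = L := by field_simp
    _ = 2 * L := by ring

lemma wempDiffY {n m : ℕ} (φ : ℝ → ℝ) (L : ℝ) (hL0 : 0 ≤ L)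
    (hlip : ∀ a ∈ Set.Icc (0:ℝ) 1, ∀ b ∈ Set.Icc (0:ℝ) 1, |φ a - φ b| ≤ L * |a - b|)
    (u : Fin n → ℝ) (w w' : Fin m → ℝ) (j : Fin m)
    (h : ∀ k, k ≠ j → w k = w' k) :
    |Wemp φ u w - Wemp φ u w'| ≤ L := by
  classical
  set K : ℝ := (n : ℝ) + (m : ℝ) + 1 with hK
  have hKpos : (0:ℝ) < K := by positivity
  have hterm : ∀ k : Fin n,
      |φ ((Rank u w k : ℝ) / K) - φ ((Rank u w' k : ℝ) / K)| ≤ L / K := by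
    intro k
    have hr1 : Rank u w k ≤ Rank u w' k + 1 := by
      unfold Rank
      have hcard : (Finset.univ.filter fun j' => w j' ≤ u k).card
          ≤ (Finset.univ.filter fun j' => w' j' ≤ u k).card + 1 := by
        refine cardFilterDiff _ _ j fun j' hj' => ?_
        rw [h j' hj']
      omega
    have hr2 : Rank u w' k ≤ Rank u w k + 1 := by
      unfold Rank
      have hcard : (Finset.univ.filter fun j' => w' j' ≤ u k).card
          ≤ (Finset.univ.filter fun j' => w j' ≤ u k).card + 1 := by
        refine cardFilterDiff _ _ j fun j' hj' => ?_
        rw [h j' hj']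
      omega
    have habs : |(Rank u w k : ℝ) - (Rank u w' k : ℝ)| ≤ 1 := natDiffOne hr1 hr2
    calc |φ ((Rank u w k : ℝ) / K) - φ ((Rank u w' k : ℝ) / K)|
        ≤ L * |(Rank u w k : ℝ) / K - (Rank u w' k : ℝ) / K| :=
          hlip _ (rank_mem u w k) _ (rank_mem u w' k)
      _ = L * (|(Rank u w k : ℝ) - (Rank u w' k : ℝ)| / K) := by
          rw [div_sub_div_same, abs_div, abs_of_pos hKpos]
      _ ≤ L * (1 / K) := by
          refine mul_le_mul_of_nonneg_left ?_ hL0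
          gcongr
      _ = L / K := by ring
  have hsplit : Wemp φ u w - Wemp φ u w'
      = ∑ k : Fin n, (φ ((Rank u w k : ℝ) / K) - φ ((Rank u w' k : ℝ) / K)) := by
    unfold Wemp
    rw [← Finset.sum_sub_distrib]
  rw [hsplit]
  calc |∑ k : Fin n, (φ ((Rank u w k : ℝ) / K) - φ ((Rank u w' k : ℝ) / K))|
      ≤ ∑ k : Fin n, |φ ((Rank u w k : ℝ) / K) - φ ((Rank u w' k : ℝ) / K)| :=
        Finset.abs_sum_le_sum_abs _ _
    _ ≤ ∑ _k : Fin n, (L / K) := Finset.sum_le_sum fun k _ => hterm k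
    _ ≤ L := by
        rw [Finset.sum_const, nsmul_eq_mul]
        have hcard : ((Finset.univ : Finset (Fin n)).card : ℝ) ≤ K := by
          simp only [Finset.card_univ, Fintype.card_fin]
          rw [hK]
          have hm0 : (0:ℝ) ≤ (m:ℝ) := Nat.cast_nonneg m
          linarith
        calc ((Finset.univ : Finset (Fin n)).card : ℝ) * (L / K) ≤ K * (L / K) :=
              mul_le_mul_of_nonneg_right hcard (by positivity)
          _ = L := by field_simp

lemma prodPiMgf {E : Type*} [MeasurableSpace E] (G H : Measure E)
    [IsProbabilityMeasure G] [IsProbabilityMeasure H] (n m : ℕ)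
    (Z : (Fin n → E) × (Fin m → E) → ℝ) (hZ : Measurable Z)
    (B : ℝ) (hB0 : 0 ≤ B) (hB : ∀ z, |Z z| ≤ B)
    (c₁ c₂ : ℝ) (hc₁ : 0 ≤ c₁) (hc₂ : 0 ≤ c₂)
    (hdx : ∀ (x x' : Fin n → E) (y : Fin m → E) (i : Fin n),
      (∀ k, k ≠ i → x k = x' k) → |Z (x, y) - Z (x', y)| ≤ c₁)
    (hdy : ∀ (x : Fin n → E) (y y' : Fin m → E) (j : Fin m),
      (∀ k, k ≠ j → y k = y' k) → |Z (x, y) - Z (x, y')| ≤ c₂)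
    (l : ℝ) :
    ∫ z, Real.exp (l * (Z z - ∫ z', Z z'
        ∂((Measure.pi fun _ : Fin n => G).prod (Measure.pi fun _ : Fin m => H))))
      ∂((Measure.pi fun _ : Fin n => G).prod (Measure.pi fun _ : Fin m => H))
      ≤ Real.exp (l ^ 2 * ((n : ℝ) * c₁ ^ 2 + (m : ℝ) * c₂ ^ 2) / 2) := by
  set πn := Measure.pi fun _ : Fin n => G with hπn
  set πm := Measure.pi fun _ : Fin m => H with hπm
  have hsec : ∀ y : Fin m → E, Measurable fun x => Z (x, y) := fun y =>
    hZ.comp (measurable_id.prodMk measurable_const)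
  have hsecint : ∀ y, Integrable (fun x => Z (x, y)) πn := fun y =>
    intBdd (hsec y).aestronglyMeasurable fun x => hB _
  set g : (Fin m → E) → ℝ := fun y => ∫ x, Z (x, y) ∂πn with hg
  have hgmeas : Measurable g := hZ.stronglyMeasurable.integral_prod_left'.measurable
  have hgB : ∀ y, |g y| ≤ B := by
    intro y
    have := norm_integral_le_of_norm_le_const (μ := πn)
      (f := fun x => Z (x, y)) (C := B)
      (ae_of_all _ fun x => by simpa [Real.norm_eq_abs] using hB (x, y))
    simpa [Real.norm_eq_abs] using this
  have H1 : ∀ y, ∫ x, Real.exp (l * (Z (x, y) - ∫ x', Z (x', y) ∂πn)) ∂πn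
      ≤ Real.exp (l ^ 2 * ((n : ℝ) * c₁ ^ 2) / 2) :=
    fun y => piMgf G n (fun x => Z (x, y)) (hsec y) B hB0 (fun x => hB _) c₁ hc₁
      (fun x x' i h => hdx x x' y i h) l
  have H2 : ∫ y, Real.exp (l * (g y - ∫ y', g y' ∂πm)) ∂πm
      ≤ Real.exp (l ^ 2 * ((m : ℝ) * c₂ ^ 2) / 2) := by
    refine piMgf H m g hgmeas B hB0 hgB c₂ hc₂ (fun y y' j h => ?_) l
    have hdiffint : g y - g y' = ∫ x, (Z (x, y) - Z (x, y')) ∂πn := by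
      rw [integral_sub (hsecint y) (hsecint y')]
    rw [hdiffint]
    have := norm_integral_le_of_norm_le_const (μ := πn)
      (f := fun x => Z (x, y) - Z (x, y')) (C := c₂)
      (ae_of_all _ fun x => by simpa [Real.norm_eq_abs] using hdy x y y' j h)
    simpa [Real.norm_eq_abs] using this
  have := tensorMgf πn πm Z hZ B hB l
    (l ^ 2 * ((n : ℝ) * c₁ ^ 2) / 2) (l ^ 2 * ((m : ℝ) * c₂ ^ 2) / 2) H1 H2
  refine this.trans (le_of_eq ?_)
  congr 1
  ring

lemma chernoff {α : Type*} [MeasurableSpace α] (μ : Measure α) [IsProbabilityMeasure μ]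
    (Z : α → ℝ) (hZ : Measurable Z) (B : ℝ) (hB : ∀ x, |Z x| ≤ B) (V : ℝ) (hV : 0 < V)
    (hmgf : ∀ l : ℝ, ∫ x, Real.exp (l * (Z x - ∫ x', Z x' ∂μ)) ∂μ
      ≤ Real.exp (l ^ 2 * V / 2))
    (t : ℝ) (ht : 0 < t) :
    μ {x | (∫ x', Z x' ∂μ) + t ≤ Z x} ≤ ENNReal.ofReal (Real.exp (-(t ^ 2 / (2 * V)))) := by
  set l : ℝ := t / V with hl
  have hl0 : 0 < l := div_pos ht hV
  set EZ : ℝ := ∫ x', Z x' ∂μ with hEZ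
  have hset : {x | EZ + t ≤ Z x}
      = {x | Real.exp (l * t) ≤ Real.exp (l * (Z x - EZ))} := by
    ext x
    simp only [Set.mem_setOf_eq, Real.exp_le_exp]
    rw [mul_le_mul_iff_right₀ hl0]
    constructor <;> intro h <;> linarith
  have hfmeas : Measurable fun x => Real.exp (l * (Z x - EZ)) :=
    Real.continuous_exp.measurable.comp ((hZ.sub measurable_const).const_mul l)
  have hfint : Integrable (fun x => Real.exp (l * (Z x - EZ))) μ := by
    refine intBdd hfmeas.aestronglyMeasurable (C := Real.exp (|l| * (B + |EZ|)))
      fun x => ?_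
    rw [abs_of_pos (Real.exp_pos _)]
    refine Real.exp_le_exp.mpr ?_
    calc l * (Z x - EZ) ≤ |l * (Z x - EZ)| := le_abs_self _
      _ = |l| * |Z x - EZ| := abs_mul _ _
      _ ≤ |l| * (B + |EZ|) := by
          have h1 : |Z x - EZ| ≤ |Z x| + |EZ| := abs_sub _ _
          nlinarith [abs_nonneg l, hB x, abs_nonneg (Z x)]
  have hmarkov := mul_meas_ge_le_integral_of_nonneg
    (ae_of_all μ fun x => (Real.exp_pos (l * (Z x - EZ))).le) hfint (Real.exp (l * t))
  have hle : (μ {x | EZ + t ≤ Z x}).toReal ≤ Real.exp (-(t ^ 2 / (2 * V))) := by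
    rw [hset]
    have hexp : ∫ x, Real.exp (l * (Z x - EZ)) ∂μ ≤ Real.exp (l ^ 2 * V / 2) := hmgf l
    have h2 : Real.exp (l * t) * (μ {x | Real.exp (l * t)
        ≤ Real.exp (l * (Z x - EZ))}).toReal ≤ Real.exp (l ^ 2 * V / 2) :=
      hmarkov.trans hexp
    have h3 : (μ {x | Real.exp (l * t) ≤ Real.exp (l * (Z x - EZ))}).toReal
        ≤ Real.exp (l ^ 2 * V / 2) / Real.exp (l * t) := by
      rw [le_div_iff₀ (Real.exp_pos _)]
      linarith [h2]
    refine h3.trans (le_of_eq ?_)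
    rw [← Real.exp_sub]
    congr 1
    rw [hl]
    field_simp [hl]
    ring
  rw [← ENNReal.ofReal_toReal (measure_ne_top μ _)]
  exact ENNReal.ofReal_le_ofReal hle

set_option maxHeartbeats 1000000 in
/-- bounded-differences concentration of the supremum deviation of the
two-sample rank process around its mean. -/
theorem stmt11 (φ : ℝ → ℝ) (hφmono : MonotoneOn φ (Set.Icc 0 1))
    (hφC2 : ContDiff ℝ 2 φ)
    (d : ℕ) (G H : Measure (Fin d → ℝ))
    [IsProbabilityMeasure G] [IsProbabilityMeasure H]
    (p : ℝ) (hp0 : 0 < p) (hp1 : p < 1) (M : ℝ) (hM : 0 < M)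
    (S₀ : Set ((Fin d → ℝ) → ℝ)) (hcount : S₀.Countable)
    (hSmeas : ∀ s ∈ S₀, Measurable s)
    (hSG : ∀ s ∈ S₀, HasSmoothDensity G s M)
    (hSH : ∀ s ∈ S₀, HasSmoothDensity H s M)
    (N n m : ℕ) (hN : (1 : ℝ) / p ≤ N) (hn : n = ⌊p * (N : ℝ)⌋₊) (hm : m = N - n)
    (Ω : Type) (mΩ : MeasurableSpace Ω) (P : Measure Ω)
    (hP : IsProbabilityMeasure P)
    (X : Fin n → Ω → (Fin d → ℝ)) (Y : Fin m → Ω → (Fin d → ℝ))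
    (hXmeas : ∀ i, Measurable (X i)) (hYmeas : ∀ j, Measurable (Y j))
    (hlaw : Measure.map (fun ω => ((fun i => X i ω), (fun j => Y j ω))) P
      = (Measure.pi fun _ : Fin n => G).prod (Measure.pi fun _ : Fin m => H))
    (t : ℝ) (ht : 0 < t) :
    P {ω | (∫ ω', (⨆ s : S₀,
              |Wperf G H p φ s
                - Wemp φ (fun i => (s : (Fin d → ℝ) → ℝ) (X i ω'))
                    (fun j => (s : (Fin d → ℝ) → ℝ) (Y j ω')) / (n : ℝ)|) ∂P) + t
            ≤ ⨆ s : S₀,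
              |Wperf G H p φ s
                - Wemp φ (fun i => (s : (Fin d → ℝ) → ℝ) (X i ω))
                    (fun j => (s : (Fin d → ℝ) → ℝ) (Y j ω)) / (n : ℝ)|}
      ≤ ENNReal.ofReal (Real.exp (-(p ^ 2 * (N : ℝ) * t ^ 2 /
          (6 * (supNormIcc φ ^ 2 + 9 * supNormIcc (deriv φ) ^ 2
            + 9 * supNormIcc (deriv (deriv φ)) ^ 2))))) := by
  classical
  have hφcont : Continuous φ := hφC2.continuous
  have hφ'cont : Continuous (deriv φ) := hφC2.continuous_deriv (by norm_num)
  have hBφ0 : 0 ≤ supNormIcc φ := supNormIcc_nonneg hφcont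
  have hL0 : 0 ≤ supNormIcc (deriv φ) := supNormIcc_nonneg hφ'cont
  have hφbound : ∀ u ∈ Set.Icc (0:ℝ) 1, |φ u| ≤ supNormIcc φ :=
    fun u hu => supNormIcc_ge hφcont hu
  have hlip : ∀ a ∈ Set.Icc (0:ℝ) 1, ∀ b ∈ Set.Icc (0:ℝ) 1,
      |φ a - φ b| ≤ supNormIcc (deriv φ) * |a - b| := by
    intro a ha b hb
    have := Convex.norm_image_sub_le_of_norm_deriv_le (𝕜 := ℝ) (f := φ)
      (s := Set.Icc (0:ℝ) 1) (C := supNormIcc (deriv φ))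
      (fun x _ => (hφC2.differentiable (by norm_num)).differentiableAt)
      (fun x hx => by simpa [Real.norm_eq_abs] using supNormIcc_ge hφ'cont hx)
      (convex_Icc 0 1) hb ha
    simpa [Real.norm_eq_abs] using this
  -- arithmetic facts about n, m, N
  have hpN1 : (1:ℝ) ≤ p * N := by
    rw [div_le_iff₀ hp0] at hN
    linarith
  have hn1 : 1 ≤ n := by
    rw [hn]
    exact Nat.le_floor (by exact_mod_cast hpN1)
  have hn0R : (0:ℝ) < (n:ℝ) := by exact_mod_cast hn1
  have hpN2n : p * (N:ℝ) ≤ 2 * n := by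
    rcases le_total (p * (N:ℝ)) 2 with h2 | h2
    · have : (1:ℝ) ≤ (n:ℝ) := by exact_mod_cast hn1
      linarith
    · have hfl : p * (N:ℝ) - 1 < (n:ℝ) := by
        rw [hn]
        exact_mod_cast Nat.sub_one_lt_floor (p * (N:ℝ))
      linarith
  have hnN : n ≤ N := by
    rw [hn]
    calc ⌊p * (N:ℝ)⌋₊ ≤ ⌊(N:ℝ)⌋₊ :=
          Nat.floor_le_floor (by nlinarith [Nat.cast_nonneg (α := ℝ) N])
      _ = N := Nat.floor_natCast N
  have hmN : (m:ℝ) ≤ (N:ℝ) := by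
    have : m ≤ N := by omega
    exact_mod_cast this
  -- the deviation process
  let Dev : S₀ → ((Fin n → (Fin d → ℝ)) × (Fin m → (Fin d → ℝ))) → ℝ := fun s z =>
    |Wperf G H p φ s - Wemp φ (fun i => (s : (Fin d → ℝ) → ℝ) (z.1 i))
      (fun j => (s : (Fin d → ℝ) → ℝ) (z.2 j)) / (n : ℝ)|
  let Z : ((Fin n → (Fin d → ℝ)) × (Fin m → (Fin d → ℝ))) → ℝ :=
    fun z => ⨆ s : S₀, Dev s z
  let T : Ω → ((Fin n → (Fin d → ℝ)) × (Fin m → (Fin d → ℝ))) :=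
    fun ω => ((fun i => X i ω), (fun j => Y j ω))
  have hTmeas : Measurable T :=
    (measurable_pi_lambda _ hXmeas).prodMk (measurable_pi_lambda _ hYmeas)
  -- bounds on the building blocks
  have hpool : ∀ s : S₀, ∀ u : ℝ, pooledCDF G H p s u ∈ Set.Icc (0:ℝ) 1 := by
    intro s u
    have hsmeas := hSmeas s s.2
    have hscore : ∀ (μ : Measure (Fin d → ℝ)), IsProbabilityMeasure μ →
        scoreCDF μ (s : (Fin d → ℝ) → ℝ) u ∈ Set.Icc (0:ℝ) 1 := by
      intro μ hμ
      haveI := hμ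
      haveI : IsProbabilityMeasure (μ.map (s : (Fin d → ℝ) → ℝ)) :=
        Measure.isProbabilityMeasure_map hsmeas.aemeasurable
      constructor
      · exact ENNReal.toReal_nonneg
      · rw [scoreCDF]
        calc ((μ.map (s : (Fin d → ℝ) → ℝ)) (Set.Iic u)).toReal
            ≤ ((μ.map (s : (Fin d → ℝ) → ℝ)) Set.univ).toReal := by
              apply ENNReal.toReal_mono (measure_ne_top _ _)
              exact measure_mono (Set.subset_univ _)
          _ = 1 := by simp
    obtain ⟨hg0, hg1⟩ := hscore G inferInstance
    obtain ⟨hh0, hh1⟩ := hscore H inferInstance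
    constructor
    · rw [pooledCDF]; nlinarith
    · rw [pooledCDF]; nlinarith
  have hWperf : ∀ s : S₀, |Wperf G H p φ s| ≤ supNormIcc φ := by
    intro s
    rw [Wperf]
    have := norm_integral_le_of_norm_le_const (μ := G)
      (f := fun x => φ (pooledCDF G H p s ((s : (Fin d → ℝ) → ℝ) x)))
      (C := supNormIcc φ)
      (ae_of_all _ fun x => by
        simpa [Real.norm_eq_abs] using hφbound _ (hpool s _))
    simpa [Real.norm_eq_abs] using this
  have hWemp : ∀ (u : Fin n → ℝ) (w : Fin m → ℝ),
      |Wemp φ u w / (n:ℝ)| ≤ supNormIcc φ := by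
    intro u w
    rw [abs_div, abs_of_pos hn0R, div_le_iff₀ hn0R]
    calc |Wemp φ u w|
        ≤ ∑ i : Fin n, |φ ((Rank u w i : ℝ) / ((n:ℝ)+(m:ℝ)+1))| := by
          rw [Wemp]; exact Finset.abs_sum_le_sum_abs _ _
      _ ≤ ∑ _i : Fin n, supNormIcc φ := Finset.sum_le_sum fun i _ =>
          hφbound _ (rank_mem u w i)
      _ = supNormIcc φ * n := by simp [mul_comm]
  have hDevB : ∀ (s : S₀) z, Dev s z ≤ 2 * supNormIcc φ := by
    intro s z
    calc Dev s z
        ≤ |Wperf G H p φ s| + |Wemp φ (fun i => (s : (Fin d → ℝ) → ℝ) (z.1 i))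
          (fun j => (s : (Fin d → ℝ) → ℝ) (z.2 j)) / (n : ℝ)| := abs_sub _ _
      _ ≤ supNormIcc φ + supNormIcc φ := add_le_add (hWperf s) (hWemp _ _)
      _ = 2 * supNormIcc φ := by ring
  have hBdd : ∀ z, BddAbove (Set.range fun s : S₀ => Dev s z) := by
    intro z
    refine ⟨2 * supNormIcc φ, ?_⟩
    rintro _ ⟨s, rfl⟩
    exact hDevB s z
  have hZ0 : ∀ z, 0 ≤ Z z := by
    intro z
    rcases isEmpty_or_nonempty S₀ with hι | hι
    · simp [Z, Real.iSup_of_isEmpty]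
    · obtain ⟨s0⟩ := hι
      exact le_trans (abs_nonneg _) (le_ciSup (hBdd z) s0)
  have hZB : ∀ z, |Z z| ≤ 2 * supNormIcc φ := by
    intro z
    rw [abs_of_nonneg (hZ0 z)]
    rcases isEmpty_or_nonempty S₀ with hι | hι
    · simp only [Z, Real.iSup_of_isEmpty]
      positivity
    · exact ciSup_le fun s => hDevB s z
  -- measurability of Z
  haveI : Countable S₀ := hcount.to_subtype
  have hDevMeas : ∀ s : S₀, Measurable (Dev s) := by
    intro s
    have hsmeas := hSmeas s s.2
    have hco : ∀ k : Fin n, Measurable fun z :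
        (Fin n → (Fin d → ℝ)) × (Fin m → (Fin d → ℝ)) =>
        (s : (Fin d → ℝ) → ℝ) (z.1 k) := fun k =>
      hsmeas.comp ((measurable_pi_apply k).comp measurable_fst)
    have hco' : ∀ j : Fin m, Measurable fun z :
        (Fin n → (Fin d → ℝ)) × (Fin m → (Fin d → ℝ)) =>
        (s : (Fin d → ℝ) → ℝ) (z.2 j) := fun j =>
      hsmeas.comp ((measurable_pi_apply j).comp measurable_snd)
    have hrank : ∀ i : Fin n, Measurable fun z :
        (Fin n → (Fin d → ℝ)) × (Fin m → (Fin d → ℝ)) =>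
        ((Rank (fun k => (s : (Fin d → ℝ) → ℝ) (z.1 k))
          (fun j => (s : (Fin d → ℝ) → ℝ) (z.2 j)) i : ℕ) : ℝ) := by
      intro i
      have hexpand : ∀ z : (Fin n → (Fin d → ℝ)) × (Fin m → (Fin d → ℝ)),
          ((Rank (fun k => (s : (Fin d → ℝ) → ℝ) (z.1 k))
            (fun j => (s : (Fin d → ℝ) → ℝ) (z.2 j)) i : ℕ) : ℝ)
          = (∑ k : Fin n, if (s : (Fin d → ℝ) → ℝ) (z.1 k)
                ≤ (s : (Fin d → ℝ) → ℝ) (z.1 i) then (1:ℝ) else 0)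
            + ∑ j : Fin m, if (s : (Fin d → ℝ) → ℝ) (z.2 j)
                ≤ (s : (Fin d → ℝ) → ℝ) (z.1 i) then (1:ℝ) else 0 := by
        intro z
        rw [Rank]
        push_cast [Finset.card_filter]
        rfl
      simp_rw [hexpand]
      refine Measurable.add ?_ ?_
      · refine Finset.measurable_sum _ fun k _ => Measurable.ite ?_
          measurable_const measurable_const
        exact measurableSet_le (hco k) (hco i)
      · refine Finset.measurable_sum _ fun j _ => Measurable.ite ?_
          measurable_const measurable_const
        exact measurableSet_le (hco' j) (hco i)
    have hwemp : Measurable fun z : (Fin n → (Fin d → ℝ)) × (Fin m → (Fin d → ℝ)) =>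
        Wemp φ (fun i => (s : (Fin d → ℝ) → ℝ) (z.1 i))
          (fun j => (s : (Fin d → ℝ) → ℝ) (z.2 j)) := by
      unfold Wemp
      refine Finset.measurable_sum _ fun i _ => ?_
      exact hφcont.measurable.comp ((hrank i).div_const _)
    exact ((measurable_const.sub (hwemp.div_const _))).abs
  have hZmeas : Measurable Z := Measurable.iSup fun s => hDevMeas s
  -- bounded differences for Z
  have hZdx : ∀ (x x' : Fin n → (Fin d → ℝ)) (y : Fin m → (Fin d → ℝ)) (i : Fin n),
      (∀ k, k ≠ i → x k = x' k) →
      |Z (x, y) - Z (x', y)| ≤ 2 * supNormIcc (deriv φ) / n := by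
    intro x x' y i h
    refine supLip _ _ _ (by positivity) (hBdd _) (hBdd _) fun s => ?_
    have habs : |Dev s (x, y) - Dev s (x', y)|
        ≤ |Wemp φ (fun k => (s : (Fin d → ℝ) → ℝ) (x k))
            (fun j => (s : (Fin d → ℝ) → ℝ) (y j)) / (n:ℝ)
          - Wemp φ (fun k => (s : (Fin d → ℝ) → ℝ) (x' k))
            (fun j => (s : (Fin d → ℝ) → ℝ) (y j)) / (n:ℝ)| := by
      refine (abs_abs_sub_abs_le_abs_sub _ _).trans (le_of_eq ?_)
      rw [← abs_sub_comm]
      congr 1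
      ring
    refine habs.trans ?_
    rw [div_sub_div_same, abs_div, abs_of_pos hn0R]
    have hwd := wempDiffX φ (supNormIcc (deriv φ)) hL0 hlip
      (fun k => (s : (Fin d → ℝ) → ℝ) (x k))
      (fun k => (s : (Fin d → ℝ) → ℝ) (x' k))
      (fun j => (s : (Fin d → ℝ) → ℝ) (y j)) i
      (fun k hk => congrArg _ (h k hk))
    gcongr
  have hZdy : ∀ (x : Fin n → (Fin d → ℝ)) (y y' : Fin m → (Fin d → ℝ)) (j : Fin m),
      (∀ k, k ≠ j → y k = y' k) →
      |Z (x, y) - Z (x, y')| ≤ supNormIcc (deriv φ) / n := by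
    intro x y y' j h
    refine supLip _ _ _ (by positivity) (hBdd _) (hBdd _) fun s => ?_
    have habs : |Dev s (x, y) - Dev s (x, y')|
        ≤ |Wemp φ (fun k => (s : (Fin d → ℝ) → ℝ) (x k))
            (fun j' => (s : (Fin d → ℝ) → ℝ) (y j')) / (n:ℝ)
          - Wemp φ (fun k => (s : (Fin d → ℝ) → ℝ) (x k))
            (fun j' => (s : (Fin d → ℝ) → ℝ) (y' j')) / (n:ℝ)| := by
      refine (abs_abs_sub_abs_le_abs_sub _ _).trans (le_of_eq ?_)
      rw [← abs_sub_comm]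
      congr 1
      ring
    refine habs.trans ?_
    rw [div_sub_div_same, abs_div, abs_of_pos hn0R]
    have hwd := wempDiffY φ (supNormIcc (deriv φ)) hL0 hlip
      (fun k => (s : (Fin d → ℝ) → ℝ) (x k))
      (fun j' => (s : (Fin d → ℝ) → ℝ) (y j'))
      (fun j' => (s : (Fin d → ℝ) → ℝ) (y' j')) j
      (fun k hk => congrArg _ (h k hk))
    gcongr
  -- identify the process on Ω with Z ∘ T
  have hZT : ∀ ω : Ω, (⨆ s : S₀,
      |Wperf G H p φ s
        - Wemp φ (fun i => (s : (Fin d → ℝ) → ℝ) (X i ω))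
            (fun j => (s : (Fin d → ℝ) → ℝ) (Y j ω)) / (n : ℝ)|) = Z (T ω) :=
    fun ω => rfl
  by_cases hLz : supNormIcc (deriv φ) = 0
  · -- degenerate case : φ is constant on [0,1] and the deviation vanishes
    have hphiconst : ∀ a ∈ Set.Icc (0:ℝ) 1, φ a = φ 0 := by
      intro a ha
      have h1 := hlip a ha 0 (by norm_num)
      rw [hLz, zero_mul] at h1
      have h2 : |φ a - φ 0| = 0 := le_antisymm h1 (abs_nonneg _)
      have := abs_eq_zero.mp h2
      linarith
    have hZzero : ∀ z, Z z = 0 := by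
      intro z
      have hdev0 : ∀ s : S₀, Dev s z = 0 := by
        intro s
        have hwp : Wperf G H p φ s = φ 0 := by
          rw [Wperf]
          have : (fun x => φ (pooledCDF G H p s ((s : (Fin d → ℝ) → ℝ) x)))
              = fun _ : (Fin d → ℝ) => φ 0 :=
            funext fun x => hphiconst _ (hpool s _)
          rw [this, integral_const]
          simp
        have hwe : Wemp φ (fun i => (s : (Fin d → ℝ) → ℝ) (z.1 i))
            (fun j => (s : (Fin d → ℝ) → ℝ) (z.2 j)) = n * φ 0 := by
          rw [Wemp]
          rw [Finset.sum_congr rfl fun i _ => hphiconst _ (rank_mem _ _ i)]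
          simp [mul_comm]
        simp only [Dev, hwp, hwe]
        have hcancel : (n:ℝ) * φ 0 / n = φ 0 := by field_simp
        rw [hcancel, sub_self, abs_zero]
      rcases isEmpty_or_nonempty S₀ with hι | hι
      · simp [Z, Real.iSup_of_isEmpty]
      · simp only [Z]
        rw [show (fun s : S₀ => Dev s z) = fun _ => (0:ℝ) from funext hdev0]
        exact ciSup_const
    have hempty : {ω | (∫ ω', (⨆ s : S₀,
        |Wperf G H p φ s
          - Wemp φ (fun i => (s : (Fin d → ℝ) → ℝ) (X i ω'))
              (fun j => (s : (Fin d → ℝ) → ℝ) (Y j ω')) / (n : ℝ)|) ∂P) + t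
        ≤ ⨆ s : S₀,
          |Wperf G H p φ s
            - Wemp φ (fun i => (s : (Fin d → ℝ) → ℝ) (X i ω))
                (fun j => (s : (Fin d → ℝ) → ℝ) (Y j ω)) / (n : ℝ)|} = ∅ := by
      rw [Set.eq_empty_iff_forall_notMem]
      intro ω hω
      rw [Set.mem_setOf_eq] at hω
      rw [hZT ω, hZzero] at hω
      have hint0 : ∫ ω', (⨆ s : S₀,
          |Wperf G H p φ s
            - Wemp φ (fun i => (s : (Fin d → ℝ) → ℝ) (X i ω'))
                (fun j => (s : (Fin d → ℝ) → ℝ) (Y j ω')) / (n : ℝ)|) ∂P = 0 := by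
        have : ∀ ω' : Ω, (⨆ s : S₀,
            |Wperf G H p φ s
              - Wemp φ (fun i => (s : (Fin d → ℝ) → ℝ) (X i ω'))
                  (fun j => (s : (Fin d → ℝ) → ℝ) (Y j ω')) / (n : ℝ)|) = 0 :=
          fun ω' => (hZT ω').trans (hZzero _)
        simp only [this]
        exact integral_zero _ _
      rw [hint0] at hω
      linarith
    rw [hempty]
    simp
  · -- main case
    have hLpos : 0 < supNormIcc (deriv φ) := lt_of_le_of_ne hL0 (Ne.symm hLz)
    set Pr : Measure ((Fin n → (Fin d → ℝ)) × (Fin m → (Fin d → ℝ))) :=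
      (Measure.pi fun _ : Fin n => G).prod (Measure.pi fun _ : Fin m => H) with hPr
    haveI : IsProbabilityMeasure Pr := by rw [hPr]; infer_instance
    set V : ℝ := (n:ℝ) * (2 * supNormIcc (deriv φ) / n) ^ 2
      + (m:ℝ) * (supNormIcc (deriv φ) / n) ^ 2 with hV
    have hVpos : 0 < V := by
      have h1 : 0 < (n:ℝ) * (2 * supNormIcc (deriv φ) / n) ^ 2 := by positivity
      have h2 : 0 ≤ (m:ℝ) * (supNormIcc (deriv φ) / n) ^ 2 := by positivity
      rw [hV]; linarith
    have hmgf : ∀ l : ℝ, ∫ z, Real.exp (l * (Z z - ∫ z', Z z' ∂Pr)) ∂Pr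
        ≤ Real.exp (l ^ 2 * V / 2) := fun l =>
      prodPiMgf G H n m Z hZmeas (2 * supNormIcc φ) (by positivity) hZB
        (2 * supNormIcc (deriv φ) / n) (supNormIcc (deriv φ) / n)
        (by positivity) (by positivity)
        (fun x x' y i h => hZdx x x' y i h) (fun x y y' j h => hZdy x y y' j h) l
    have hcher := chernoff Pr Z hZmeas (2 * supNormIcc φ) hZB V hVpos hmgf t ht
    -- transfer to Ω
    have hEq : (∫ ω', (⨆ s : S₀,
        |Wperf G H p φ s
          - Wemp φ (fun i => (s : (Fin d → ℝ) → ℝ) (X i ω'))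
              (fun j => (s : (Fin d → ℝ) → ℝ) (Y j ω')) / (n : ℝ)|) ∂P)
        = ∫ z, Z z ∂Pr := by
      simp only [hZT]
      rw [show (∫ ω', Z (T ω') ∂P) = ∫ z, Z z ∂(Measure.map T P) from
        (integral_map hTmeas.aemeasurable hZmeas.aestronglyMeasurable).symm]
      rw [show Measure.map T P = Pr from hlaw]
    have hS : MeasurableSet {z : (Fin n → (Fin d → ℝ)) × (Fin m → (Fin d → ℝ)) |
        (∫ z', Z z' ∂Pr) + t ≤ Z z} := measurableSet_le measurable_const hZmeas
    have hsetEq : {ω | (∫ ω', (⨆ s : S₀,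
          |Wperf G H p φ s
            - Wemp φ (fun i => (s : (Fin d → ℝ) → ℝ) (X i ω'))
                (fun j => (s : (Fin d → ℝ) → ℝ) (Y j ω')) / (n : ℝ)|) ∂P) + t
          ≤ ⨆ s : S₀,
            |Wperf G H p φ s
              - Wemp φ (fun i => (s : (Fin d → ℝ) → ℝ) (X i ω))
                  (fun j => (s : (Fin d → ℝ) → ℝ) (Y j ω)) / (n : ℝ)|}
        = T ⁻¹' {z | (∫ z', Z z' ∂Pr) + t ≤ Z z} := by
      ext ω
      simp only [Set.mem_setOf_eq, Set.mem_preimage]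
      rw [hZT ω, hEq]
    have hPeq : P {ω | (∫ ω', (⨆ s : S₀,
          |Wperf G H p φ s
            - Wemp φ (fun i => (s : (Fin d → ℝ) → ℝ) (X i ω'))
                (fun j => (s : (Fin d → ℝ) → ℝ) (Y j ω')) / (n : ℝ)|) ∂P) + t
          ≤ ⨆ s : S₀,
            |Wperf G H p φ s
              - Wemp φ (fun i => (s : (Fin d → ℝ) → ℝ) (X i ω))
                  (fun j => (s : (Fin d → ℝ) → ℝ) (Y j ω)) / (n : ℝ)|}
        = Pr {z | (∫ z', Z z' ∂Pr) + t ≤ Z z} := by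
      rw [hsetEq, ← Measure.map_apply hTmeas hS,
        show Measure.map T P = Pr from hlaw]
    rw [hPeq]
    refine hcher.trans (ENNReal.ofReal_le_ofReal (Real.exp_le_exp.mpr ?_))
    -- numeric comparison of the exponents
    rw [neg_le_neg_iff]
    have hC9 : 9 * supNormIcc (deriv φ) ^ 2
        ≤ supNormIcc φ ^ 2 + 9 * supNormIcc (deriv φ) ^ 2
          + 9 * supNormIcc (deriv (deriv φ)) ^ 2 := by
      linarith [sq_nonneg (supNormIcc φ), sq_nonneg (supNormIcc (deriv (deriv φ)))]
    have hCpos : 0 < supNormIcc φ ^ 2 + 9 * supNormIcc (deriv φ) ^ 2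
        + 9 * supNormIcc (deriv (deriv φ)) ^ 2 := by
      have : 0 < 9 * supNormIcc (deriv φ) ^ 2 := by positivity
      linarith
    have hkey : p ^ 2 * (N:ℝ) * V
        ≤ 3 * (supNormIcc φ ^ 2 + 9 * supNormIcc (deriv φ) ^ 2
          + 9 * supNormIcc (deriv (deriv φ)) ^ 2) := by
      have e1 : (n:ℝ) * (2 * supNormIcc (deriv φ) / n) ^ 2
          = 4 * supNormIcc (deriv φ) ^ 2 / n := by
        field_simp
        ring
      have e2 : (m:ℝ) * (supNormIcc (deriv φ) / n) ^ 2
          = (m:ℝ) * supNormIcc (deriv φ) ^ 2 / (n:ℝ) ^ 2 := by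
        rw [div_pow]
        ring
      have k1 : p ^ 2 * (N:ℝ) * (4 * supNormIcc (deriv φ) ^ 2 / n)
          ≤ 8 * supNormIcc (deriv φ) ^ 2 := by
        rw [show p ^ 2 * (N:ℝ) * (4 * supNormIcc (deriv φ) ^ 2 / n)
          = (p ^ 2 * (N:ℝ) * (4 * supNormIcc (deriv φ) ^ 2)) / n from by ring]
        rw [div_le_iff₀ hn0R]
        have i1 : 4 * supNormIcc (deriv φ) ^ 2 * p * (p * N)
            ≤ 4 * supNormIcc (deriv φ) ^ 2 * p * (2 * n) :=
          mul_le_mul_of_nonneg_left hpN2n (by positivity)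
        have i2 : 4 * supNormIcc (deriv φ) ^ 2 * p * (2 * (n:ℝ))
            ≤ 8 * supNormIcc (deriv φ) ^ 2 * n := by
          have h0 : 0 ≤ 8 * supNormIcc (deriv φ) ^ 2 * (n:ℝ) * (1 - p) :=
            mul_nonneg (by positivity) (by linarith)
          nlinarith [h0]
        calc p ^ 2 * (N:ℝ) * (4 * supNormIcc (deriv φ) ^ 2)
            = 4 * supNormIcc (deriv φ) ^ 2 * p * (p * N) := by ring
          _ ≤ 4 * supNormIcc (deriv φ) ^ 2 * p * (2 * n) := i1
          _ ≤ 8 * supNormIcc (deriv φ) ^ 2 * n := i2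
      have k2 : p ^ 2 * (N:ℝ) * ((m:ℝ) * supNormIcc (deriv φ) ^ 2 / (n:ℝ) ^ 2)
          ≤ 4 * supNormIcc (deriv φ) ^ 2 := by
        rw [show p ^ 2 * (N:ℝ) * ((m:ℝ) * supNormIcc (deriv φ) ^ 2 / (n:ℝ) ^ 2)
          = (p ^ 2 * (N:ℝ) * (m:ℝ) * supNormIcc (deriv φ) ^ 2) / (n:ℝ) ^ 2 from by
            ring]
        rw [div_le_iff₀ (by positivity)]
        have j0 : p ^ 2 * (N:ℝ) * supNormIcc (deriv φ) ^ 2 * (m:ℝ)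
            ≤ p ^ 2 * (N:ℝ) * supNormIcc (deriv φ) ^ 2 * (N:ℝ) :=
          mul_le_mul_of_nonneg_left hmN (by positivity)
        have j1 : (p * (N:ℝ)) * (p * (N:ℝ)) ≤ (2 * (n:ℝ)) * (2 * (n:ℝ)) :=
          mul_self_le_mul_self (by nlinarith [hpN1]) hpN2n
        have j2 := mul_le_mul_of_nonneg_left j1 (sq_nonneg (supNormIcc (deriv φ)))
        calc p ^ 2 * (N:ℝ) * (m:ℝ) * supNormIcc (deriv φ) ^ 2
            = p ^ 2 * (N:ℝ) * supNormIcc (deriv φ) ^ 2 * (m:ℝ) := by ring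
          _ ≤ p ^ 2 * (N:ℝ) * supNormIcc (deriv φ) ^ 2 * (N:ℝ) := j0
          _ = supNormIcc (deriv φ) ^ 2 * ((p * N) * (p * N)) := by ring
          _ ≤ supNormIcc (deriv φ) ^ 2 * ((2 * n) * (2 * n)) := j2
          _ = 4 * supNormIcc (deriv φ) ^ 2 * (n:ℝ) ^ 2 := by ring
      have hsplit : p ^ 2 * (N:ℝ) * V
          = p ^ 2 * (N:ℝ) * (4 * supNormIcc (deriv φ) ^ 2 / n)
            + p ^ 2 * (N:ℝ) * ((m:ℝ) * supNormIcc (deriv φ) ^ 2 / (n:ℝ) ^ 2) := by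
        rw [hV, e1, e2]
        ring
      rw [hsplit]
      linarith [k1, k2, hC9]
    rw [div_le_div_iff₀ (by positivity) (by positivity : (0:ℝ) < 2 * V)]
    have hfin := mul_le_mul_of_nonneg_left hkey
      (show (0:ℝ) ≤ 2 * t ^ 2 by positivity)
    linarith [hfin]
end
end

section
/- Let F be the cumulative distribution function of a real random variable admitting a Lebesgue density f which is differentiable with |f'(t)| ≤ M for all t. Let K : ℝ → ℝ be an integrable kernel with K(−u) = K(u) for all u, ∫ K(u) du = 1 and μ₂ := ∫ u²·|K(u)| du < ∞, and set κ(t) = ∫_{−∞}^t K(u) du and, for h > 0, F̃_h(t) = ∫ κ((t−u)/h) dF(u). Then for every t ∈ ℝ and every h > 0, |F̃_h(t) − F(t)| ≤ (M/2)·h²·μ₂. -/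
open MeasureTheory

noncomputable section

/-- Auxiliary Taylor-type bound: if `g` satisfies `|g y - g x| ≤ M * |y - x|`, then the
primitive of `g` satisfies a second-order bound. -/
lemma aux_taylor12 (g : ℝ → ℝ) (hg : Continuous g) (M : ℝ)
    (hlip : ∀ x y : ℝ, |g y - g x| ≤ M * |y - x|) (x y : ℝ) :
    |(∫ s in x..y, g s) - (y - x) * g x| ≤ M / 2 * (y - x) ^ 2 := by
  have hconst : (y - x) * g x = ∫ s in x..y, g x := by
    simp [smul_eq_mul]
  rw [hconst, ← intervalIntegral.integral_sub (hg.intervalIntegrable x y)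
    (intervalIntegrable_const)]
  have hgi : ∀ a b : ℝ, IntervalIntegrable (fun s => g s - g x) volume a b :=
    fun a b => (hg.sub continuous_const).intervalIntegrable a b
  rcases le_total x y with hxy | hxy
  · calc |∫ s in x..y, (g s - g x)| ≤ ∫ s in x..y, |g s - g x| := by
          simpa [Real.norm_eq_abs] using
            intervalIntegral.norm_integral_le_integral_norm
              (f := fun s => g s - g x) (μ := volume) hxy
      _ ≤ ∫ s in x..y, M * (s - x) := by
          apply intervalIntegral.integral_mono_on hxy (hgi x y).abs
          · exact ((continuous_const.mul (continuous_id.sub continuous_const)).intervalIntegrable x y)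
          · intro s hs
            have := hlip x s
            rwa [abs_of_nonneg (sub_nonneg.2 hs.1)] at this
      _ = M / 2 * (y - x) ^ 2 := by
          rw [intervalIntegral.integral_const_mul,
            intervalIntegral.integral_sub intervalIntegral.intervalIntegrable_id
              intervalIntegrable_const,
            integral_id, intervalIntegral.integral_const]
          simp only [smul_eq_mul]; ring
  · have hsymm : |∫ s in x..y, (g s - g x)| = |∫ s in y..x, (g s - g x)| := by
      rw [intervalIntegral.integral_symm, abs_neg]
    rw [hsymm]
    calc |∫ s in y..x, (g s - g x)| ≤ ∫ s in y..x, |g s - g x| := by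
          simpa [Real.norm_eq_abs] using
            intervalIntegral.norm_integral_le_integral_norm
              (f := fun s => g s - g x) (μ := volume) hxy
      _ ≤ ∫ s in y..x, M * (x - s) := by
          apply intervalIntegral.integral_mono_on hxy (hgi y x).abs
          · exact ((continuous_const.mul (continuous_const.sub continuous_id)).intervalIntegrable y x)
          · intro s hs
            have h1 := hlip x s
            rwa [abs_of_nonpos (sub_nonpos.2 hs.2), neg_sub] at h1
      _ = M / 2 * (y - x) ^ 2 := by
          rw [intervalIntegral.integral_const_mul,
            intervalIntegral.integral_sub intervalIntegrable_const
              intervalIntegral.intervalIntegrable_id,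
            integral_id, intervalIntegral.integral_const]
          simp only [smul_eq_mul]; ring

/-- bias of the kernel-smoothed cdf. If the cdf `F` of `μ` has a Lebesgue
density `f` with derivative bounded by `M`, and `K` is a symmetric integrable kernel with
`∫ K = 1` and finite second absolute moment, then for every `t` and `h > 0`,
`|F̃_h(t) − F(t)| ≤ (M/2)·h²·∫ u²·|K(u)| du`, where `F̃_h(t) = ∫ κ((t−u)/h) dF(u)` and
`κ(t) = ∫_{−∞}^t K`. -/
theorem stmt12 (μ : Measure ℝ) [IsProbabilityMeasure μ]
    (f f' : ℝ → ℝ) (M : ℝ)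
    (hμ : μ = MeasureTheory.volume.withDensity fun t => ENNReal.ofReal (f t))
    (hf : ∀ t, HasDerivAt f (f' t) t) (hf'bdd : ∀ t, |f' t| ≤ M)
    (K : ℝ → ℝ) (hKint : Integrable K)
    (hKsymm : ∀ u, K (-u) = K u)
    (hKone : (∫ u, K u) = 1)
    (hKmom : Integrable fun u => u ^ 2 * |K u|)
    (t h : ℝ) (hh : 0 < h) :
    |(∫ u, (∫ v in Set.Iic ((t - u) / h), K v) ∂μ) - (μ (Set.Iic t)).toReal|
      ≤ (M / 2) * h ^ 2 * ∫ u, u ^ 2 * |K u| := by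
  -- the nonnegative part of the density
  set g : ℝ → ℝ := fun s => max (f s) 0 with hg_def
  have hf_cont : Continuous f := by
    rw [continuous_iff_continuousAt]; exact fun x => (hf x).continuousAt
  have hg_cont : Continuous g := hf_cont.max continuous_const
  have hg_nonneg : ∀ s, 0 ≤ g s := fun s => le_max_right _ _
  have hf_lip : ∀ x y : ℝ, |f y - f x| ≤ M * |y - x| := by
    intro x y
    have := Convex.norm_image_sub_le_of_norm_hasDerivWithin_le
      (f := f) (f' := f') (s := (Set.univ : Set ℝ)) (C := M)
      (fun z _ => (hf z).hasDerivWithinAt) (fun z _ => hf'bdd z) convex_univ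
      (Set.mem_univ x) (Set.mem_univ y)
    simpa [Real.norm_eq_abs] using this
  have hg_lip : ∀ x y : ℝ, |g y - g x| ≤ M * |y - x| :=
    fun x y => le_trans (abs_max_sub_max_le_abs _ _ _) (hf_lip x y)
  -- rewrite the density with `g`
  have hof : (fun s => ENNReal.ofReal (f s)) = fun s => ENNReal.ofReal (g s) := by
    funext s
    rcases le_total 0 (f s) with hs | hs
    · simp [hg_def, max_eq_left hs]
    · simp [hg_def, max_eq_right hs, ENNReal.ofReal_of_nonpos hs]
  have hμ' : μ = MeasureTheory.volume.withDensity fun s => ENNReal.ofReal (g s) := by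
    rw [hμ, hof]
  -- total mass
  have hmass : (∫⁻ s, ENNReal.ofReal (g s)) = 1 := by
    have h1 : μ Set.univ = 1 := measure_univ
    rw [hμ', withDensity_apply _ MeasurableSet.univ, Measure.restrict_univ] at h1
    exact h1
  -- integrability of g
  have hg_int : Integrable g := by
    refine ⟨hg_cont.aestronglyMeasurable, ?_⟩
    rw [hasFiniteIntegral_iff_norm]
    have heq : ∀ a, ENNReal.ofReal ‖g a‖ = ENNReal.ofReal (g a) := fun a => by
      rw [Real.norm_of_nonneg (hg_nonneg a)]
    simp_rw [heq, hmass]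
    exact ENNReal.one_lt_top
  -- the cdf
  set F : ℝ → ℝ := fun x => ∫ s in Set.Iic x, g s with hF_def
  have hF_eq : ∀ x, (μ (Set.Iic x)).toReal = F x := by
    intro x
    rw [hμ', withDensity_apply _ measurableSet_Iic]
    have h2 : (∫⁻ s in Set.Iic x, ENNReal.ofReal (g s))
        = ENNReal.ofReal (∫ s in Set.Iic x, g s) :=
      (ofReal_integral_eq_lintegral_ofReal hg_int.integrableOn
        (Filter.Eventually.of_forall fun s => hg_nonneg s)).symm
    rw [h2, ENNReal.toReal_ofReal
      (setIntegral_nonneg measurableSet_Iic fun s _ => hg_nonneg s)]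
  have hF_nonneg : ∀ x, 0 ≤ F x :=
    fun x => setIntegral_nonneg measurableSet_Iic fun s _ => hg_nonneg s
  have hF_le : ∀ x, F x ≤ ∫ s, g s :=
    fun x => setIntegral_le_integral hg_int (Filter.Eventually.of_forall hg_nonneg)
  have hF_mono : Monotone F := fun x y hxy =>
    setIntegral_mono_set hg_int.integrableOn
      (Filter.Eventually.of_forall hg_nonneg)
      (HasSubset.Subset.eventuallyLE (Set.Iic_subset_Iic.2 hxy))
  -- Taylor bound
  have taylor : ∀ x y : ℝ, |F y - F x - (y - x) * g x| ≤ M / 2 * (y - x) ^ 2 := by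
    intro x y
    have hFd : F y - F x = ∫ s in x..y, g s :=
      intervalIntegral.integral_Iic_sub_Iic hg_int.integrableOn hg_int.integrableOn
    rw [hFd]
    exact aux_taylor12 g hg_cont M hg_lip x y
  -- the Fubini step
  set W : ℝ × ℝ → ℝ :=
    fun p => ({q : ℝ × ℝ | q.1 + h * q.2 ≤ t}).indicator (fun q => g q.1 * K q.2) p
    with hW_def
  have hSmeas : MeasurableSet {q : ℝ × ℝ | q.1 + h * q.2 ≤ t} := by
    have hc : Continuous fun q : ℝ × ℝ => q.1 + h * q.2 :=
      continuous_fst.add (continuous_const.mul continuous_snd)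
    exact measurableSet_le hc.measurable measurable_const
  have hW_int : Integrable W (volume.prod volume) :=
    (hg_int.mul_prod hKint).indicator hSmeas
  have hLHS : (∫ u, (∫ v in Set.Iic ((t - u) / h), K v) ∂μ)
      = ∫ v, K v * F (t - h * v) := by
    have hμ'' : μ = MeasureTheory.volume.withDensity
        fun s => ((Real.toNNReal (g s) : NNReal) : ENNReal) := hμ'
    rw [hμ'', integral_withDensity_eq_integral_smul
      (f := fun s => (g s).toNNReal)
      (measurable_real_toNNReal.comp hg_cont.measurable) _]
    have hsmul : (fun u => Real.toNNReal (g u) • (∫ v in Set.Iic ((t - u) / h), K v))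
        = fun u => g u * (∫ v in Set.Iic ((t - u) / h), K v) := by
      funext u
      rw [NNReal.smul_def, Real.coe_toNNReal _ (hg_nonneg u), smul_eq_mul]
    rw [hsmul]
    have hpt : ∀ u, g u * (∫ v in Set.Iic ((t - u) / h), K v) = ∫ v, W (u, v) := by
      intro u
      have hfun : (fun v => W (u, v))
          = ({v : ℝ | u + h * v ≤ t}).indicator (fun v => g u * K v) := by
        funext v; simp [hW_def, Set.indicator_apply]
      have hset : {v : ℝ | u + h * v ≤ t} = Set.Iic ((t - u) / h) := by
        ext v
        simp only [Set.mem_setOf_eq, Set.mem_Iic, le_div_iff₀ hh]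
        constructor <;> intro hv <;> nlinarith
      rw [hfun, hset, integral_indicator measurableSet_Iic, integral_const_mul]
    have step1 : (∫ u, g u * (∫ v in Set.Iic ((t - u) / h), K v))
        = ∫ u, ∫ v, W (u, v) :=
      integral_congr_ae (Filter.Eventually.of_forall hpt)
    have hswap : (∫ u, ∫ v, W (u, v)) = ∫ v, ∫ u, W (u, v) :=
      integral_integral_swap hW_int
    have hinner : ∀ v, (∫ u, W (u, v)) = K v * F (t - h * v) := by
      intro v
      have hfun : (fun u => W (u, v))
          = (Set.Iic (t - h * v)).indicator (fun u => g u * K v) := by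
        funext u
        have hiff : (u + h * v ≤ t) ↔ u ≤ t - h * v := by constructor <;> intro <;> linarith
        simp [hW_def, Set.indicator_apply, hiff]
      rw [hfun, integral_indicator measurableSet_Iic, integral_mul_const, mul_comm]
    rw [step1, hswap]
    exact integral_congr_ae (Filter.Eventually.of_forall fun v => hinner v)
  -- integrabilities
  have hF_meas : AEStronglyMeasurable (fun v : ℝ => F (t - h * v)) volume :=
    (hF_mono.measurable.comp
      ((measurable_const.sub (measurable_const.mul measurable_id)))).aestronglyMeasurable
  have i1 : Integrable (fun v : ℝ => K v * F (t - h * v)) := by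
    have := hKint.bdd_mul hF_meas (c := ∫ s, g s) (Filter.Eventually.of_forall fun v => by
      rw [Real.norm_of_nonneg (hF_nonneg _)]; exact hF_le _)
    simpa [mul_comm] using this
  have i2 : Integrable (fun v : ℝ => K v * F t) := hKint.mul_const _
  have i3 : Integrable (fun v : ℝ => v * K v) := by
    refine (hKint.abs.add hKmom).mono'
      (aestronglyMeasurable_id.mul hKint.aestronglyMeasurable)
      (Filter.Eventually.of_forall fun v => ?_)
    have h1 : ‖v * K v‖ = |v| * |K v| := by rw [Real.norm_eq_abs, abs_mul]
    rw [h1]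
    simp only [Pi.add_apply]
    have h2 : (0:ℝ) ≤ |K v| := abs_nonneg _
    nlinarith [sq_nonneg (|v| - 1), sq_abs v]
  have hmoment0 : (∫ v, v * K v) = 0 := by
    have h1 : (∫ v : ℝ, (-v) * K (-v)) = ∫ v, v * K v :=
      integral_neg_eq_self (fun v => v * K v) volume
    have h2 : (∫ v : ℝ, (-v) * K (-v)) = - ∫ v, v * K v := by
      simp_rw [hKsymm, neg_mul]
      exact integral_neg _
    linarith
  -- combine
  rw [hLHS, hF_eq t]
  have e1 : (∫ v, K v * F t) = F t := by rw [integral_mul_const, hKone, one_mul]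
  have e2 : (∫ v : ℝ, K v * (h * v * g t)) = 0 := by
    have hre : (fun v : ℝ => K v * (h * v * g t)) = fun v => (h * g t) * (v * K v) :=
      funext fun v => by ring
    rw [hre, integral_const_mul, hmoment0, mul_zero]
  have i3' : Integrable (fun v : ℝ => K v * (h * v * g t)) := by
    have hre : (fun v : ℝ => K v * (h * v * g t)) = fun v => (h * g t) * (v * K v) :=
      funext fun v => by ring
    rw [hre]; exact i3.const_mul _
  have hEq : (∫ v, K v * F (t - h * v)) - F t
      = ∫ v, K v * (F (t - h * v) - F t + h * v * g t) := by
    have hre : (fun v : ℝ => K v * (F (t - h * v) - F t + h * v * g t))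
        = fun v => (K v * F (t - h * v) - K v * F t) + K v * (h * v * g t) :=
      funext fun v => by ring
    have i12 : Integrable (fun v : ℝ => K v * F (t - h * v) - K v * F t) := i1.sub i2
    rw [hre, integral_add i12 i3', integral_sub i1 i2, e1, e2, add_zero]
  rw [hEq]
  have hbound : ∀ v : ℝ, ‖K v * (F (t - h * v) - F t + h * v * g t)‖
      ≤ (M / 2 * h ^ 2) * (v ^ 2 * |K v|) := by
    intro v
    have htay := taylor t (t - h * v)
    have hE : F (t - h * v) - F t - (t - h * v - t) * g t
        = F (t - h * v) - F t + h * v * g t := by ring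
    rw [hE] at htay
    have hsq : (t - h * v - t) ^ 2 = h ^ 2 * v ^ 2 := by ring
    rw [hsq] at htay
    rw [Real.norm_eq_abs, abs_mul]
    calc |K v| * |F (t - h * v) - F t + h * v * g t|
        ≤ |K v| * (M / 2 * (h ^ 2 * v ^ 2)) :=
          mul_le_mul_of_nonneg_left htay (abs_nonneg _)
      _ = (M / 2 * h ^ 2) * (v ^ 2 * |K v|) := by ring
  have hfinal := norm_integral_le_of_norm_le (hKmom.const_mul (M / 2 * h ^ 2))
    (Filter.Eventually.of_forall hbound)
  rw [Real.norm_eq_abs] at hfinal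
  calc |∫ v, K v * (F (t - h * v) - F t + h * v * g t)|
      ≤ ∫ v, (M / 2 * h ^ 2) * (v ^ 2 * |K v|) := hfinal
    _ = (M / 2) * h ^ 2 * ∫ u, u ^ 2 * |K u| := by
        rw [integral_const_mul]
end
end

section
/- Let φ : [0,1] → ℝ be continuously differentiable with ‖φ'‖_∞ = sup_{u∈[0,1]}|φ'(u)| < ∞, and let n, m ≥ 1, N = n + m. For x ∈ ℝⁿ and y ∈ ℝ^m define Rank_i(x,y) = #{k ≤ n : x_k ≤ x_i} + #{j ≤ m : y_j ≤ x_i} and Ŵ(x,y) = Σ_{i=1}^n φ(Rank_i(x,y)/(N+1)). Then: (a) if y, y' ∈ ℝ^m differ in exactly one coordinate, |Ŵ(x,y) − Ŵ(x,y')| ≤ n·‖φ'‖_∞/(N+1); (b) if x, x' ∈ ℝⁿ differ in exactly one coordinate, |Ŵ(x,y) − Ŵ(x',y)| ≤ ‖φ'‖_∞·(1 + (n−1)/(N+1)). -/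
open Finset

noncomputable section

private lemma card_filter_le_off {α : Type*} [Fintype α] [DecidableEq α]
    (P Q : α → Prop) [DecidablePred P] [DecidablePred Q] (j₀ : α)
    (h : ∀ k, k ≠ j₀ → (P k ↔ Q k)) :
    (univ.filter P).card ≤ (univ.filter Q).card + 1 := by
  have hsub : univ.filter P ⊆ insert j₀ (univ.filter Q) := by
    intro k hk
    rcases eq_or_ne k j₀ with rfl | hkj
    · exact mem_insert_self _ _
    · refine mem_insert_of_mem ?_
      simp only [mem_filter, mem_univ, true_and] at hk ⊢
      exact (h k hkj).mp hk
  exact (card_le_card hsub).trans (card_insert_le _ _)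

private lemma abs_cast_sub_le_one {a b : ℕ} (h1 : a ≤ b + 1) (h2 : b ≤ a + 1) :
    |(a : ℝ) - b| ≤ 1 := by
  rw [abs_sub_le_iff]
  constructor
  · have : (a : ℝ) ≤ (b : ℝ) + 1 := by exact_mod_cast h1
    linarith
  · have : (b : ℝ) ≤ (a : ℝ) + 1 := by exact_mod_cast h2
    linarith

/-- bounded differences for the two-sample linear rank statistic. -/
theorem stmt15 (φ φd : ℝ → ℝ)
    (hφd : ∀ t, HasDerivAt φ (φd t) t) (hφdc : Continuous φd)
    (n m : ℕ) (hn : 1 ≤ n) (hm : 1 ≤ m) :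
    (∀ (x : Fin n → ℝ) (y y' : Fin m → ℝ),
      (∃ j₀ : Fin m, y j₀ ≠ y' j₀ ∧ ∀ j : Fin m, j ≠ j₀ → y j = y' j) →
      |Wemp φ x y - Wemp φ x y'|
        ≤ (n : ℝ) * (⨆ u : Set.Icc (0 : ℝ) 1, |φd u|) / ((n : ℝ) + (m : ℝ) + 1)) ∧
    (∀ (x x' : Fin n → ℝ) (y : Fin m → ℝ),
      (∃ i₀ : Fin n, x i₀ ≠ x' i₀ ∧ ∀ i : Fin n, i ≠ i₀ → x i = x' i) →
      |Wemp φ x y - Wemp φ x' y|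
        ≤ (⨆ u : Set.Icc (0 : ℝ) 1, |φd u|)
            * (1 + ((n : ℝ) - 1) / ((n : ℝ) + (m : ℝ) + 1))) := by
  set N1 : ℝ := (n : ℝ) + (m : ℝ) + 1 with hN1
  have hN1pos : 0 < N1 := by positivity
  set C : ℝ := ⨆ u : Set.Icc (0 : ℝ) 1, |φd u| with hC
  have hbdd : BddAbove (Set.range fun u : Set.Icc (0 : ℝ) 1 => |φd u|) := by
    have h1 : IsCompact ((fun u => |φd u|) '' Set.Icc (0 : ℝ) 1) :=
      isCompact_Icc.image hφdc.abs
    refine h1.bddAbove.mono ?_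
    rw [show (fun u : Set.Icc (0 : ℝ) 1 => |φd u|)
        = (fun u => |φd u|) ∘ Subtype.val from rfl, Set.range_comp, Subtype.range_coe]
  have hCle : ∀ u ∈ Set.Icc (0 : ℝ) 1, |φd u| ≤ C := fun u hu =>
    le_ciSup hbdd (⟨u, hu⟩ : Set.Icc (0 : ℝ) 1)
  have hC0 : 0 ≤ C := le_trans (abs_nonneg _) (hCle 0 ⟨le_refl _, zero_le_one⟩)
  have hlip : ∀ a ∈ Set.Icc (0 : ℝ) 1, ∀ b ∈ Set.Icc (0 : ℝ) 1,
      |φ a - φ b| ≤ C * |a - b| := by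
    intro a ha b hb
    have := Convex.norm_image_sub_le_of_norm_hasDerivWithin_le
      (f := φ) (f' := φd)
      (fun u hu => (hφd u).hasDerivWithinAt)
      (fun u hu => by rw [Real.norm_eq_abs]; exact hCle u hu)
      (convex_Icc (0 : ℝ) 1) hb ha
    simpa [Real.norm_eq_abs] using this
  have hrk1 : ∀ (x : Fin n → ℝ) (y : Fin m → ℝ) (i : Fin n), 1 ≤ Rank x y i := by
    intro x y i
    have : i ∈ univ.filter fun k => x k ≤ x i := by simp
    have h1 : 1 ≤ (univ.filter fun k => x k ≤ x i).card :=
      card_pos.mpr ⟨i, this⟩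
    unfold Rank; omega
  have hrk2 : ∀ (x : Fin n → ℝ) (y : Fin m → ℝ) (i : Fin n), Rank x y i ≤ n + m := by
    intro x y i
    unfold Rank
    have h1 := card_filter_le (univ : Finset (Fin n)) fun k => x k ≤ x i
    have h2 := card_filter_le (univ : Finset (Fin m)) fun j => y j ≤ x i
    simp only [card_univ, Fintype.card_fin] at h1 h2
    omega
  have hmem : ∀ (x : Fin n → ℝ) (y : Fin m → ℝ) (i : Fin n),
      (Rank x y i : ℝ) / N1 ∈ Set.Icc (0 : ℝ) 1 := by
    intro x y i
    constructor
    · positivity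
    · rw [div_le_one hN1pos]
      have : (Rank x y i : ℝ) ≤ (n : ℝ) + m := by exact_mod_cast hrk2 x y i
      linarith
  -- generic term bound when ranks differ by at most one
  have hterm : ∀ (x : Fin n → ℝ) (y : Fin m → ℝ) (x' : Fin n → ℝ) (y' : Fin m → ℝ)
      (i : Fin n), Rank x y i ≤ Rank x' y' i + 1 → Rank x' y' i ≤ Rank x y i + 1 →
      |φ ((Rank x y i : ℝ) / N1) - φ ((Rank x' y' i : ℝ) / N1)| ≤ C / N1 := by
    intro x y x' y' i h1 h2
    have habs := abs_cast_sub_le_one h1 h2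
    calc |φ ((Rank x y i : ℝ) / N1) - φ ((Rank x' y' i : ℝ) / N1)|
        ≤ C * |(Rank x y i : ℝ) / N1 - (Rank x' y' i : ℝ) / N1| :=
          hlip _ (hmem x y i) _ (hmem x' y' i)
      _ = C * (|(Rank x y i : ℝ) - (Rank x' y' i : ℝ)| / N1) := by
          rw [div_sub_div_same, abs_div, abs_of_pos hN1pos]
      _ ≤ C * (1 / N1) := by gcongr
      _ = C / N1 := by ring
  constructor
  · rintro x y y' ⟨j₀, -, hj⟩
    have hrank : ∀ i : Fin n, Rank x y i ≤ Rank x y' i + 1 ∧ Rank x y' i ≤ Rank x y i + 1 := by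
      intro i
      have h1 := card_filter_le_off (fun j => y j ≤ x i) (fun j => y' j ≤ x i) j₀
        (fun k hk => by simp only [hj k hk])
      have h2 := card_filter_le_off (fun j => y' j ≤ x i) (fun j => y j ≤ x i) j₀
        (fun k hk => by simp only [hj k hk])
      unfold Rank; omega
    rw [Wemp, Wemp, ← hN1, ← Finset.sum_sub_distrib]
    refine (Finset.abs_sum_le_sum_abs _ _).trans ?_
    calc (∑ i : Fin n, |φ ((Rank x y i : ℝ) / N1) - φ ((Rank x y' i : ℝ) / N1)|)
        ≤ ∑ _i : Fin n, C / N1 := Finset.sum_le_sum fun i _ =>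
          hterm x y x y' i (hrank i).1 (hrank i).2
      _ = (n : ℝ) * (C / N1) := by
          rw [Finset.sum_const, card_univ, Fintype.card_fin, nsmul_eq_mul]
      _ = (n : ℝ) * C / N1 := by ring
  · rintro x x' y ⟨i₀, -, hi⟩
    have hrank : ∀ i : Fin n, i ≠ i₀ →
        Rank x y i ≤ Rank x' y i + 1 ∧ Rank x' y i ≤ Rank x y i + 1 := by
      intro i hii
      have hxi : x i = x' i := hi i hii
      have h1 := card_filter_le_off (fun k => x k ≤ x i) (fun k => x' k ≤ x' i) i₀
        (fun k hk => by simp only [hi k hk, hxi])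
      have h2 := card_filter_le_off (fun k => x' k ≤ x' i) (fun k => x k ≤ x i) i₀
        (fun k hk => by simp only [hi k hk, hxi])
      have h3 : (univ.filter fun j => y j ≤ x i).card
          = (univ.filter fun j => y j ≤ x' i).card := by rw [hxi]
      unfold Rank; omega
    rw [Wemp, Wemp, ← hN1, ← Finset.sum_sub_distrib]
    refine (Finset.abs_sum_le_sum_abs _ _).trans ?_
    rw [← Finset.add_sum_erase _ _ (mem_univ i₀)]
    have hmain : |φ ((Rank x y i₀ : ℝ) / N1) - φ ((Rank x' y i₀ : ℝ) / N1)| ≤ C := by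
      have h := hlip _ (hmem x y i₀) _ (hmem x' y i₀)
      have hle : |(Rank x y i₀ : ℝ) / N1 - (Rank x' y i₀ : ℝ) / N1| ≤ 1 := by
        rw [abs_sub_le_iff]
        have h1 := (hmem x y i₀).1
        have h2 := (hmem x y i₀).2
        have h3 := (hmem x' y i₀).1
        have h4 := (hmem x' y i₀).2
        constructor <;> linarith
      calc _ ≤ C * |(Rank x y i₀ : ℝ) / N1 - (Rank x' y i₀ : ℝ) / N1| := h
        _ ≤ C * 1 := by gcongr
        _ = C := mul_one C
    have hrest : (∑ i ∈ univ.erase i₀,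
        |φ ((Rank x y i : ℝ) / N1) - φ ((Rank x' y i : ℝ) / N1)|)
        ≤ ((n : ℝ) - 1) * (C / N1) := by
      calc (∑ i ∈ univ.erase i₀,
          |φ ((Rank x y i : ℝ) / N1) - φ ((Rank x' y i : ℝ) / N1)|)
          ≤ ∑ _i ∈ univ.erase i₀, C / N1 := Finset.sum_le_sum fun i hi' => by
            have hii : i ≠ i₀ := Finset.ne_of_mem_erase hi'
            exact hterm x y x' y i (hrank i hii).1 (hrank i hii).2
        _ = ((n - 1 : ℕ) : ℝ) * (C / N1) := by
            rw [Finset.sum_const, nsmul_eq_mul, Finset.card_erase_of_mem (mem_univ i₀),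
              card_univ, Fintype.card_fin]
        _ = ((n : ℝ) - 1) * (C / N1) := by
            rw [Nat.cast_sub hn, Nat.cast_one]
    have : C + ((n : ℝ) - 1) * (C / N1) = C * (1 + ((n : ℝ) - 1) / N1) := by
      field_simp
    linarith [hmain, hrest]
end
end
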